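/- arXiv:2009.01150 — 7 statements merged into one kernel-verified Lean document; each statement's English description precedes it below -/
import Mathlib

section
/- In the Baumslag-Solitar group G = BS(1,-1) = ⟨a,t | t⁻¹at = a⁻¹⟩ (the Klein bottle group), for every s ≥ 1 the (s+1)-st term of the lower central series equals the cyclic subgroup generated by a^{2^s}: γ_{s+1}G = ⟨a^{2^s}⟩. -/
/-- The defining relation of the Baumslag-Solitar group `BS(m,n)`:
`t⁻¹ * a^m * t * a^(-n)`. -/
def BSrels (m n : ℤ) : Set (FreeGroup (Fin 2)) :=
  {(FreeGroup.of 1)⁻¹ * (FreeGroup.of 0) ^ m * (FreeGroup.of 1) * ((FreeGroup.of 0) ^ n)⁻¹}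

/-- The Baumslag-Solitar group `BS(m,n) = ⟨a, t ∣ t⁻¹ aᵐ t = aⁿ⟩`. -/
abbrev BS (m n : ℤ) : Type := PresentedGroup (BSrels m n)

/-- The generator `a` of `BS(m,n)`. -/
def bsa (m n : ℤ) : BS m n := PresentedGroup.of 0

/-- The generator `t` of `BS(m,n)`. -/
def bst (m n : ℤ) : BS m n := PresentedGroup.of 1

namespace KB

open scoped commutatorElement

local notation "G" => BS 1 (-1)
local notation "a" => bsa 1 (-1)
local notation "t" => bst 1 (-1)

lemma conjinv {x g h : G} (hx : x * g * x⁻¹ = h) : x * g⁻¹ * x⁻¹ = h⁻¹ := by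
  rw [← hx]; group

lemma rel : (t)⁻¹ * a * (t) = (a)⁻¹ := by
  have h : PresentedGroup.mk (BSrels 1 (-1))
      ((FreeGroup.of 1)⁻¹ * (FreeGroup.of 0) ^ (1:ℤ) * (FreeGroup.of 1) *
        ((FreeGroup.of 0) ^ (-1:ℤ))⁻¹) = 1 :=
    (QuotientGroup.eq_one_iff _).mpr (Subgroup.subset_normalClosure rfl)
  simp only [map_mul, map_inv, map_zpow] at h
  have h' : (t)⁻¹ * (a) ^ (1:ℤ) * (t) * ((a) ^ (-1:ℤ))⁻¹ = 1 := h
  rw [zpow_one, zpow_neg_one, inv_inv] at h'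
  rw [mul_eq_one_iff_eq_inv.mp h']

lemma conj_t : (t) * a * (t)⁻¹ = (a)⁻¹ := by
  have h1 : a = (t) * (a)⁻¹ * (t)⁻¹ := by rw [← rel]; group
  calc (t) * a * (t)⁻¹ = ((t) * (a)⁻¹ * (t)⁻¹)⁻¹ := by group
  _ = (a)⁻¹ := by rw [← h1]

/-- Every element conjugates `a` to `a` or `a⁻¹`. -/
lemma conj_a (h : G) : h * a * h⁻¹ = a ∨ h * a * h⁻¹ = (a)⁻¹ := by
  let P : Subgroup G := {
    carrier := {h : G | h * a * h⁻¹ = a ∨ h * a * h⁻¹ = (a)⁻¹}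
    one_mem' := by left; group
    mul_mem' := by
      rintro x y (hx | hx) (hy | hy) <;>
        [(left); (right); (right); (left)] <;>
        · show x * y * a * (x * y)⁻¹ = _
          have e : x * y * a * (x*y)⁻¹ = x * (y * a * y⁻¹) * x⁻¹ := by group
          rw [e, hy]
          first
            | exact hx
            | · rw [conjinv hx]; try rw [inv_inv]
    inv_mem' := by
      rintro x (hx | hx)
      · left
        show x⁻¹ * a * x⁻¹⁻¹ = a
        rw [inv_inv]
        calc x⁻¹ * a * x = x⁻¹ * (x * a * x⁻¹) * x := by rw [hx]
        _ = a := by group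
      · right
        show x⁻¹ * a * x⁻¹⁻¹ = (a)⁻¹
        rw [inv_inv]
        have h2 : x * (a)⁻¹ * x⁻¹ = a := by rw [conjinv hx, inv_inv]
        calc x⁻¹ * a * x = x⁻¹ * (x * (a)⁻¹ * x⁻¹) * x := by rw [h2]
        _ = (a)⁻¹ := by group }
  refine PresentedGroup.generated_by _ P ?_ h
  intro j
  fin_cases j
  · left; show a * a * (a)⁻¹ = a; group
  · right; exact conj_t

lemma conj_zpow (h : G) (m : ℤ) :
    h * (a)^m * h⁻¹ = (a)^m ∨ h * (a)^m * h⁻¹ = (a)^(-m) := by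
  have key : h * (a)^m * h⁻¹ = (h * a * h⁻¹)^m := by
    have := map_zpow (MulAut.conj h) a m
    simpa [MulAut.conj_apply] using this.symm
  rcases conj_a h with hc | hc
  · left; rw [key, hc]
  · right; rw [key, hc, inv_zpow, ← zpow_neg]

lemma hnorm {x : G} (hx : x ∈ Subgroup.zpowers ((a)^(2:ℤ))) (h : G) :
    h * x * h⁻¹ ∈ Subgroup.zpowers ((a)^(2:ℤ)) := by
  obtain ⟨k, rfl⟩ := Subgroup.mem_zpowers_iff.mp hx
  rw [← zpow_mul]
  rcases conj_zpow h (2*k) with hc | hc <;> rw [hc]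
  · exact Subgroup.mem_zpowers_iff.mpr ⟨k, by rw [← zpow_mul]⟩
  · exact Subgroup.mem_zpowers_iff.mpr ⟨-k, by rw [← zpow_mul]; ring_nf⟩

lemma comm_a_sq : ⁅a, t⁆ = (a)^(2:ℤ) := by
  have hc : (t) * (a)⁻¹ * (t)⁻¹ = a := by rw [conjinv conj_t, inv_inv]
  rw [commutatorElement_def]
  have e : a * (t) * (a)⁻¹ * (t)⁻¹ = a * ((t) * (a)⁻¹ * (t)⁻¹) := by group
  rw [e, hc, zpow_two]

lemma comm_with_t (h : G) : ⁅h, t⁆ ∈ Subgroup.zpowers ((a)^(2:ℤ)) := by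
  let Q : Subgroup G := {
    carrier := {g : G | ⁅g, t⁆ ∈ Subgroup.zpowers ((a)^(2:ℤ))}
    one_mem' := by show ⁅(1:G), t⁆ ∈ Subgroup.zpowers ((a)^(2:ℤ)); rw [commutatorElement_one_left]; exact one_mem _
    mul_mem' := by
      intro x y hx hy
      show ⁅x * y, t⁆ ∈ Subgroup.zpowers ((a)^(2:ℤ))
      have e : ⁅x * y, t⁆ = x * ⁅y, t⁆ * x⁻¹ * ⁅x, t⁆ := by
        simp only [commutatorElement_def]; group
      rw [e]
      exact mul_mem (hnorm hy x) hx
    inv_mem' := by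
      intro x hx
      show ⁅x⁻¹, t⁆ ∈ Subgroup.zpowers ((a)^(2:ℤ))
      have e : ⁅x⁻¹, t⁆ = x⁻¹ * ⁅x, t⁆⁻¹ * x⁻¹⁻¹ := by
        simp only [commutatorElement_def]; group
      rw [e]
      exact hnorm (inv_mem hx) x⁻¹ }
  refine PresentedGroup.generated_by _ Q ?_ h
  intro j
  fin_cases j
  · show ⁅a, t⁆ ∈ Subgroup.zpowers ((a)^(2:ℤ))
    rw [comm_a_sq]; exact Subgroup.mem_zpowers _
  · show ⁅t, t⁆ ∈ Subgroup.zpowers ((a)^(2:ℤ))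
    rw [commutatorElement_self]; exact one_mem _

lemma comm_all (g h : G) : ⁅g, h⁆ ∈ Subgroup.zpowers ((a)^(2:ℤ)) := by
  let P : Subgroup G := {
    carrier := {g : G | ∀ h : G, ⁅g, h⁆ ∈ Subgroup.zpowers ((a)^(2:ℤ))}
    one_mem' := by intro h; rw [commutatorElement_one_left]; exact one_mem _
    mul_mem' := by
      intro x y hx hy h
      have e : ⁅x * y, h⁆ = x * ⁅y, h⁆ * x⁻¹ * ⁅x, h⁆ := by
        simp only [commutatorElement_def]; group
      rw [e]
      exact mul_mem (hnorm (hy h) x) (hx h)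
    inv_mem' := by
      intro x hx h
      have e : ⁅x⁻¹, h⁆ = x⁻¹ * ⁅x, h⁆⁻¹ * x⁻¹⁻¹ := by
        simp only [commutatorElement_def]; group
      rw [e]
      exact hnorm (inv_mem (hx h)) x⁻¹ }
  refine PresentedGroup.generated_by _ P ?_ g h
  intro j
  fin_cases j
  · show ∀ h : G, ⁅a, h⁆ ∈ Subgroup.zpowers ((a)^(2:ℤ))
    intro h
    have e : ⁅a, h⁆ = a * (h * (a)⁻¹ * h⁻¹) := by rw [commutatorElement_def]; group
    rcases conj_a h with hc | hc
    · rw [e, conjinv hc, mul_inv_cancel]; exact one_mem _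
    · rw [e, conjinv hc, inv_inv]
      exact Subgroup.mem_zpowers_iff.mpr ⟨1, by rw [zpow_one, zpow_two]⟩
  · show ∀ h : G, ⁅t, h⁆ ∈ Subgroup.zpowers ((a)^(2:ℤ))
    intro h
    rw [← commutatorElement_inv]
    exact inv_mem (comm_with_t h)

lemma comm_top : ⁅(⊤ : Subgroup G), (⊤ : Subgroup G)⁆ = Subgroup.zpowers ((a)^(2:ℤ)) := by
  apply le_antisymm
  · rw [Subgroup.commutator_le]
    rintro g - h -
    exact comm_all g h
  · rw [Subgroup.zpowers_le, ← comm_a_sq]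
    exact Subgroup.commutator_mem_commutator (Subgroup.mem_top _) (Subgroup.mem_top _)

lemma comm_zpowers (n : ℤ) :
    ⁅Subgroup.zpowers ((a)^n), (⊤ : Subgroup G)⁆ = Subgroup.zpowers ((a)^(2*n)) := by
  apply le_antisymm
  · rw [Subgroup.commutator_le]
    rintro g hg h -
    obtain ⟨k, rfl⟩ := Subgroup.mem_zpowers_iff.mp hg
    rw [← zpow_mul]
    have e : ⁅(a)^(n*k), h⁆ = (a)^(n*k) * (h * (a)^(-(n*k)) * h⁻¹) := by
      rw [commutatorElement_def]; group
    rcases conj_zpow h (-(n*k)) with hc | hc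
    · rw [e, hc, ← zpow_add]
      simp only [add_neg_cancel, zpow_zero]
      exact one_mem _
    · rw [e, hc, neg_neg, ← zpow_add]
      refine Subgroup.mem_zpowers_iff.mpr ⟨k, ?_⟩
      rw [← zpow_mul]; ring_nf
  · rw [Subgroup.zpowers_le]
    have hc : (t) * (a)^(-n) * (t)⁻¹ = (a)^n := by
      have := map_zpow (MulAut.conj t) a (-n)
      simp only [MulAut.conj_apply] at this
      rw [this, conj_t, inv_zpow, ← zpow_neg, neg_neg]
    have e : ⁅(a)^n, t⁆ = (a)^(2*n) := by
      rw [commutatorElement_def]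
      have e2 : (a)^n * (t) * ((a)^n)⁻¹ * (t)⁻¹ = (a)^n * ((t) * (a)^(-n) * (t)⁻¹) := by
        rw [zpow_neg]; group
      rw [e2, hc, ← zpow_add]; ring_nf
    rw [← e]
    exact Subgroup.commutator_mem_commutator (Subgroup.mem_zpowers _) (Subgroup.mem_top _)

end KB


/-- In the Klein bottle group `G = BS(1,-1)`, for every `s ≥ 1` the `(s+1)`-st term of the
lower central series (which is `lowerCentralSeries G s` in Mathlib's 0-based indexing)
equals the cyclic subgroup generated by `a^(2^s)`. -/
theorem klein_bottle_lowerCentralSeries (s : ℕ) (hs : 1 ≤ s) :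
    (⊤ : Subgroup (BS 1 (-1))).lowerCentralSeries s = Subgroup.zpowers (bsa 1 (-1) ^ ((2 : ℤ) ^ s)) := by
  induction s, hs using Nat.le_induction with
  | base =>
    rw [Subgroup.top_lowerCentralSeries_one, commutator_def, KB.comm_top]
    norm_num
  | succ n hn ih =>
    have step : (⊤ : Subgroup (BS 1 (-1))).lowerCentralSeries (n+1) =
        ⁅(⊤ : Subgroup (BS 1 (-1))).lowerCentralSeries n, ⊤⁆ := rfl
    rw [step, ih, KB.comm_zpowers]
    congr 1
    ring
end

section
/- The Klein bottle group BS(1,-1) = ⟨a,t | t⁻¹at = a⁻¹⟩ is residually nilpotent, i.e., the intersection of all terms of its lower central series is trivial. -/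
namespace KleinAux

abbrev M : Type := Multiplicative ℤ

/-- Negation automorphism of `Multiplicative ℤ`. -/
def invAut : MulAut M := MulEquiv.inv M

@[simp] lemma invAut_apply (x : M) : invAut x = x⁻¹ := rfl

lemma invAut_sq : invAut * invAut = 1 := by
  ext x
  simp [invAut]

lemma invAut_inv : invAut⁻¹ = invAut := by
  rw [inv_eq_iff_mul_eq_one, invAut_sq]

lemma invAut_zpow_add_one (k : ℤ) (x : M) :
    (invAut ^ (k + 1)) x = ((invAut ^ k) x)⁻¹ := by
  rw [zpow_add_one]
  show (invAut ^ k) (invAut x) = _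
  rw [invAut_apply, map_inv]

lemma invAut_zpow_sub_one (k : ℤ) (x : M) :
    (invAut ^ (k - 1)) x = ((invAut ^ k) x)⁻¹ := by
  rw [zpow_sub_one, invAut_inv]
  show (invAut ^ k) (invAut x) = _
  rw [invAut_apply, map_inv]

lemma invAut_zpow (k : ℤ) (x : M) : (invAut ^ k) x = x ∨ (invAut ^ k) x = x⁻¹ := by
  induction k using Int.induction_on with
  | zero => left; rw [zpow_zero]; rfl
  | succ k ih =>
    rcases ih with h | h
    · right; rw [invAut_zpow_add_one, h]
    · left; rw [invAut_zpow_add_one, h, inv_inv]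
  | pred k ih =>
    rcases ih with h | h
    · right; rw [invAut_zpow_sub_one, h]
    · left; rw [invAut_zpow_sub_one, h, inv_inv]

/-- The action of `ℤ` on `ℤ` by `(-1)^·`. -/
def φK : M →* MulAut M := zpowersHom _ invAut

lemma φK_apply (u : M) : φK u = invAut ^ u.toAdd := rfl

lemma φK_apply_or (u : M) (x : M) : φK u x = x ∨ φK u x = x⁻¹ :=
  invAut_zpow _ x

/-- The concrete Klein bottle group `ℤ ⋊ ℤ`. -/
abbrev H : Type := SemidirectProduct M M φK

open SemidirectProduct

/-- The subgroup `2^n ℤ × {0}` of `H`. -/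
def K (n : ℕ) : Subgroup H where
  carrier := {g | g.right = 1 ∧ (2 ^ n : ℤ) ∣ g.left.toAdd}
  one_mem' := by simp
  mul_mem' := by
    rintro g h ⟨hg1, hg2⟩ ⟨hh1, hh2⟩
    refine ⟨by simp [mul_right, hg1, hh1], ?_⟩
    have : (g * h).left = g.left * h.left := by
      rw [mul_left, hg1, map_one]
      rfl
    rw [this]
    exact dvd_add hg2 hh2
  inv_mem' := by
    rintro g ⟨hg1, hg2⟩
    refine ⟨by simp [inv_right, hg1], ?_⟩
    have : (g⁻¹).left = g.left⁻¹ := by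
      rw [inv_left, hg1, inv_one, map_one]
      rfl
    rw [this]
    exact (dvd_neg).2 hg2

lemma mem_K {n : ℕ} {g : H} : g ∈ K n ↔ g.right = 1 ∧ (2 ^ n : ℤ) ∣ g.left.toAdd :=
  Iff.rfl

lemma comm_formula (a b u : M) :
    ((⟨a, 1⟩ : H) * ⟨b, u⟩ * (⟨a, 1⟩ : H)⁻¹ * (⟨b, u⟩ : H)⁻¹)
      = (⟨a * ((φK u) a)⁻¹, 1⟩ : H) := by
  ext
  · simp only [mul_left, inv_left, mul_right, inv_right, map_one, one_mul, mul_one,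
      MulAut.one_apply, inv_one, map_inv]
    show a * b * ((φK u) a)⁻¹ * ((φK u) ((φK u)⁻¹ b))⁻¹ = _
    rw [MulAut.apply_inv_self, mul_right_comm a b, mul_inv_cancel_right]
    rfl
  · simp [mul_right, inv_right, mul_comm]

lemma commutator_mem (n : ℕ) (g h : H) (hg : g ∈ K n) :
    g * h * g⁻¹ * h⁻¹ ∈ K (n + 1) := by
  obtain ⟨a, s⟩ := g
  obtain ⟨b, u⟩ := h
  obtain ⟨hg1, hg2⟩ := hg
  have hs : s = 1 := hg1
  subst hs
  rw [comm_formula]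
  refine ⟨rfl, ?_⟩
  rcases φK_apply_or u a with h1 | h1
  · rw [h1]
    show (2 ^ (n+1) : ℤ) ∣ (a * a⁻¹).toAdd
    rw [mul_inv_cancel]
    simp
  · rw [h1, inv_inv]
    show (2 ^ (n + 1) : ℤ) ∣ (a.toAdd + a.toAdd)
    rw [← two_mul, pow_succ, mul_comm ((2:ℤ) ^ n) 2]
    exact mul_dvd_mul_left 2 hg2

lemma lcs_le (n : ℕ) : (⊤ : Subgroup H).lowerCentralSeries (n + 1) ≤ K n := by
  induction n with
  | zero =>
    rw [Subgroup.lowerCentralSeries_succ, Subgroup.commutator_def, Subgroup.closure_le]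
    rintro x ⟨p, -, q, -, rfl⟩
    refine ⟨?_, one_dvd _⟩
    simp [commutatorElement_def, mul_right, inv_right, mul_comm]
  | succ n ih =>
    rw [Subgroup.lowerCentralSeries_succ, Subgroup.commutator_def, Subgroup.closure_le]
    rintro x ⟨p, hp, q, -, rfl⟩
    exact commutator_mem n p q (ih hp)

lemma H_residually_nilpotent {x : H} (hx : ∀ n, x ∈ (⊤ : Subgroup H).lowerCentralSeries n) : x = 1 := by
  have hr : x.right = 1 := ((lcs_le 0) (hx 1)).1
  have hl : x.left.toAdd = 0 := by
    by_contra hne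
    set m : ℤ := x.left.toAdd with hm
    have h1 : ∀ n : ℕ, (2 ^ n : ℤ) ∣ m := fun n => ((lcs_le n) (hx (n + 1))).2
    have h2 := h1 m.natAbs
    have h3 : |m| < (2 : ℤ) ^ m.natAbs := by
      have := Nat.lt_two_pow_self (n := m.natAbs)
      calc |m| = (m.natAbs : ℤ) := by rw [Int.abs_eq_natAbs]
        _ < ((2 ^ m.natAbs : ℕ) : ℤ) := by exact_mod_cast this
        _ = (2 : ℤ) ^ m.natAbs := by push_cast; ring
    exact hne (Int.eq_zero_of_abs_lt_dvd h2 h3)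
  ext
  · exact hl
  · exact congrArg Multiplicative.toAdd hr

/-! ### The homomorphism from `BS 1 (-1)` to `H` -/

noncomputable section

def e : M := Multiplicative.ofAdd (1 : ℤ)

def fgen : Fin 2 → H := ![inl e, inr e]

lemma hrels : ∀ r ∈ BSrels 1 (-1), FreeGroup.lift fgen r = 1 := by
  intro r hr
  rw [BSrels, Set.mem_singleton_iff] at hr
  subst hr
  have h0 : (FreeGroup.lift fgen) (FreeGroup.of (0 : Fin 2)) = inl e := by
    simp [fgen]
  have h1 : (FreeGroup.lift fgen) (FreeGroup.of (1 : Fin 2)) = inr e := by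
    simp [fgen]
  rw [map_mul, map_mul, map_mul, map_inv, map_inv, map_zpow, map_zpow, h0, h1,
    zpow_one, zpow_neg_one, inv_inv]
  have key : (inr e)⁻¹ * inl e * inr e = (inl ((φK e)⁻¹ e) : H) := by
    rw [inl_aut_inv, map_inv]
  rw [key]
  have he : (φK e)⁻¹ e = e⁻¹ := by
    have h2 : φK e = invAut := by rw [φK_apply]; exact zpow_one _
    rw [h2, invAut_inv, invAut_apply]
  rw [he, ← map_mul, inv_mul_cancel, map_one]

def φBS : BS 1 (-1) →* H := PresentedGroup.toGroup hrels

lemma φBS_a : φBS (bsa 1 (-1)) = inl e := by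
  rw [bsa, φBS, PresentedGroup.toGroup.of]
  simp [fgen]

lemma φBS_t : φBS (bst 1 (-1)) = inr e := by
  rw [bst, φBS, PresentedGroup.toGroup.of]
  simp [fgen]

/-! ### The homomorphism back -/

def A : BS 1 (-1) := bsa 1 (-1)
def T : BS 1 (-1) := bst 1 (-1)

lemma rel1 : T⁻¹ * A * T = A⁻¹ := by
  have hmem : ((FreeGroup.of 1)⁻¹ * (FreeGroup.of 0) ^ (1:ℤ) * (FreeGroup.of 1) *
      ((FreeGroup.of 0) ^ (-1:ℤ))⁻¹ : FreeGroup (Fin 2)) ∈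
      Subgroup.normalClosure (BSrels 1 (-1)) :=
    Subgroup.subset_normalClosure rfl
  have h1 : PresentedGroup.mk (BSrels 1 (-1)) ((FreeGroup.of 1)⁻¹ * (FreeGroup.of 0) ^ (1:ℤ) *
      (FreeGroup.of 1) * ((FreeGroup.of 0) ^ (-1:ℤ))⁻¹) = 1 :=
    (QuotientGroup.eq_one_iff _).2 hmem
  rw [map_mul, map_mul, map_mul, map_inv, map_inv, map_zpow, map_zpow] at h1
  have ha : PresentedGroup.mk (BSrels 1 (-1)) (FreeGroup.of 0) = A := rfl
  have ht : PresentedGroup.mk (BSrels 1 (-1)) (FreeGroup.of 1) = T := rfl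
  rw [ha, ht, zpow_one, zpow_neg_one, inv_inv] at h1
  have := mul_eq_one_iff_eq_inv.1 h1
  rw [this]

lemma rel2 : T * A * T⁻¹ = A⁻¹ := by
  have h := rel1
  have h2 : A = T * A⁻¹ * T⁻¹ := by
    rw [← h]
    group
  calc T * A * T⁻¹ = (T * A⁻¹ * T⁻¹)⁻¹ := by group
    _ = A⁻¹ := by rw [← h2]

lemma conj_T_zpow (k : ℤ) : T ^ k * A * (T ^ k)⁻¹ = A ^ ((invAut ^ k) e).toAdd := by
  induction k using Int.induction_on with
  | zero => simp [e]
  | succ k ih =>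
    have h1 : T ^ ((k : ℤ) + 1) = T ^ (k : ℤ) * T := zpow_add_one T k
    rw [h1, mul_inv_rev, invAut_zpow_add_one]
    calc T ^ (k:ℤ) * T * A * (T⁻¹ * (T ^ (k:ℤ))⁻¹)
        = T ^ (k:ℤ) * (T * A * T⁻¹) * (T ^ (k:ℤ))⁻¹ := by group
      _ = T ^ (k:ℤ) * A⁻¹ * (T ^ (k:ℤ))⁻¹ := by rw [rel2]
      _ = (T ^ (k:ℤ) * A * (T ^ (k:ℤ))⁻¹)⁻¹ := by group
      _ = (A ^ ((invAut ^ (k:ℤ)) e).toAdd)⁻¹ := by rw [ih]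
      _ = A ^ (((invAut ^ (k:ℤ)) e)⁻¹).toAdd := by rw [← zpow_neg]; rfl
  | pred k ih =>
    have h1 : T ^ ((-k : ℤ) - 1) = T ^ (-k : ℤ) * T⁻¹ := by
      rw [zpow_sub_one]
    rw [h1, mul_inv_rev, inv_inv, invAut_zpow_sub_one]
    calc T ^ (-k:ℤ) * T⁻¹ * A * (T * (T ^ (-k:ℤ))⁻¹)
        = T ^ (-k:ℤ) * (T⁻¹ * A * T) * (T ^ (-k:ℤ))⁻¹ := by group
      _ = T ^ (-k:ℤ) * A⁻¹ * (T ^ (-k:ℤ))⁻¹ := by rw [rel1]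
      _ = (T ^ (-k:ℤ) * A * (T ^ (-k:ℤ))⁻¹)⁻¹ := by group
      _ = (A ^ ((invAut ^ (-k:ℤ)) e).toAdd)⁻¹ := by rw [ih]
      _ = A ^ (((invAut ^ (-k:ℤ)) e)⁻¹).toAdd := by rw [← zpow_neg]; rfl

def ψ : H →* BS 1 (-1) :=
  SemidirectProduct.lift (zpowersHom _ A) (zpowersHom _ T) (by
    intro u
    apply MonoidHom.ext_mint
    show zpowersHom _ A ((φK u) (Multiplicative.ofAdd 1)) =
      (MulAut.conj (zpowersHom _ T u)) (zpowersHom _ A (Multiplicative.ofAdd 1))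
    rw [zpowersHom_apply, zpowersHom_apply, zpowersHom_apply, MulAut.conj_apply,
      φK_apply]
    show A ^ ((invAut ^ u.toAdd) e).toAdd
      = T ^ u.toAdd * A ^ (Multiplicative.ofAdd (1:ℤ)).toAdd * (T ^ u.toAdd)⁻¹
    have h1 : (Multiplicative.ofAdd (1:ℤ)).toAdd = 1 := rfl
    rw [h1, zpow_one, conj_T_zpow])

lemma ψ_φBS : ψ.comp φBS = MonoidHom.id _ := by
  apply PresentedGroup.ext
  intro x
  fin_cases x
  · show ψ (φBS (bsa 1 (-1))) = bsa 1 (-1)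
    rw [φBS_a, ψ, SemidirectProduct.lift_inl, zpowersHom_apply]
    show A ^ (1:ℤ) = _
    rw [zpow_one]
    rfl
  · show ψ (φBS (bst 1 (-1))) = bst 1 (-1)
    rw [φBS_t, ψ, SemidirectProduct.lift_inr, zpowersHom_apply]
    show T ^ (1:ℤ) = _
    rw [zpow_one]
    rfl

end

end KleinAux

/-- The Klein bottle group `BS(1,-1)` is residually nilpotent: the intersection of all the
terms of its lower central series is trivial. -/
theorem klein_bottle_residually_nilpotent :
    (⨅ i : ℕ, (⊤ : Subgroup (BS 1 (-1))).lowerCentralSeries i) = ⊥ := by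
  rw [eq_bot_iff]
  intro g hg
  rw [Subgroup.mem_iInf] at hg
  rw [Subgroup.mem_bot]
  have hmem : ∀ n, KleinAux.φBS g ∈ (⊤ : Subgroup KleinAux.H).lowerCentralSeries n := by
    intro n
    exact Subgroup.lowerCentralSeries.map KleinAux.φBS n (Subgroup.mem_map_of_mem _ (hg n))
  have h1 : KleinAux.φBS g = 1 := KleinAux.H_residually_nilpotent hmem
  calc g = (KleinAux.ψ.comp KleinAux.φBS) g := by rw [KleinAux.ψ_φBS]; rfl
    _ = KleinAux.ψ (KleinAux.φBS g) := rfl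
    _ = 1 := by rw [h1, map_one]
end

section
/- Let G = BS(1,n) with n ≠ 1. For every i > 1, the i-th term of the lower central series γ_iG consists exactly of the elements t^l a^{α(n-1)^{i-1}} t^{-l} with l ∈ ℕ ∪ {0} and α ∈ ℤ. -/
namespace BSaux

open scoped commutatorElement

variable (n : ℤ)

local notation "a" => bsa 1 n
local notation "t" => bst 1 n
local notation "G" => BS 1 n

lemma rel : (bst 1 n)⁻¹ * bsa 1 n * bst 1 n = bsa 1 n ^ n := by
  have h : PresentedGroup.mk (BSrels 1 n)
      ((FreeGroup.of 1)⁻¹ * (FreeGroup.of 0) ^ (1:ℤ) * (FreeGroup.of 1) *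
        ((FreeGroup.of 0) ^ n)⁻¹) = 1 := by
    apply (QuotientGroup.eq_one_iff _).2
    exact Subgroup.subset_normalClosure rfl
  simp only [map_mul, map_inv, map_zpow] at h
  have := mul_eq_one_iff_eq_inv.1 h
  simpa [bsa, bst, PresentedGroup.of, PresentedGroup.mk, zpow_one] using this

lemma conj1 (c : ℤ) : (bst 1 n)⁻¹ * bsa 1 n ^ c * bst 1 n = bsa 1 n ^ (n * c) := by
  have : (bst 1 n)⁻¹ * bsa 1 n ^ c * bst 1 n = ((bst 1 n)⁻¹ * bsa 1 n * (bst 1 n)⁻¹⁻¹) ^ c := by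
    rw [conj_zpow]; group
  rw [this]
  rw [show (bst 1 n)⁻¹⁻¹ = bst 1 n from inv_inv _, rel, ← zpow_mul]

lemma conj1' (c : ℤ) : bst 1 n * bsa 1 n ^ (n * c) * (bst 1 n)⁻¹ = bsa 1 n ^ c := by
  have := conj1 n c
  calc t * a ^ (n*c) * (t)⁻¹ = t * ((t)⁻¹ * a ^ c * t) * (t)⁻¹ := by rw [this]
  _ = a ^ c := by group

/-- The element `t^l a^c t^(-l)`. -/
def e (l : ℕ) (c : ℤ) : G := bst 1 n ^ (l:ℤ) * bsa 1 n ^ c * bst 1 n ^ (-(l:ℤ))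

lemma e_conj_pow (l : ℕ) (c : ℤ) : e n l (n ^ l * c) = bsa 1 n ^ c := by
  induction l with
  | zero => simp [e]
  | succ k ih =>
      have : e n (k+1) (n ^ (k+1) * c) = t ^ (k:ℤ) * (t * a ^ (n * (n ^ k * c)) * (t)⁻¹)
          * t ^ (-(k:ℤ)) := by
        unfold e; push_cast; ring_nf; group
      rw [this, conj1']
      exact ih

lemma e_shift (l k : ℕ) (c : ℤ) : e n l c = e n (l + k) (n ^ k * c) := by
  have h : e n (l + k) (n ^ k * c) = t ^ (l:ℤ) * (e n k (n ^ k * c)) * t ^ (-(l:ℤ)) := by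
    unfold e; push_cast; group
  rw [h, e_conj_pow]
  rfl

lemma e_mul (l : ℕ) (c d : ℤ) : e n l c * e n l d = e n l (c + d) := by
  unfold e; rw [zpow_add]; group

lemma e_inv (l : ℕ) (c : ℤ) : (e n l c)⁻¹ = e n l (-c) := by
  unfold e; rw [zpow_neg]; group

lemma e_one (l : ℕ) : e n l 0 = 1 := by unfold e; group

lemma t_conj_e (l : ℕ) (c : ℤ) : t * e n l c * (t)⁻¹ = e n (l + 1) c := by
  unfold e; push_cast; group

lemma tinv_conj_e_succ (l : ℕ) (c : ℤ) : (t)⁻¹ * e n (l + 1) c * t = e n l c := by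
  unfold e; push_cast; group

lemma tinv_conj_e_zero (c : ℤ) : (t)⁻¹ * e n 0 c * t = e n 0 (n * c) := by
  unfold e
  simp only [Nat.cast_zero, neg_zero, zpow_zero, mul_one, one_mul]
  exact conj1 n c

lemma a_conj_e (l : ℕ) (c : ℤ) : a * e n l c * (a)⁻¹ = e n l c := by
  have ha : e n l (n ^ l * 1) = a := by rw [e_conj_pow]; exact zpow_one _
  calc a * e n l c * (a)⁻¹ = e n l (n ^ l * 1) * e n l c * (e n l (n ^ l * 1))⁻¹ := by rw [ha]
  _ = e n l (n ^ l * 1 + c + -(n ^ l * 1)) := by rw [e_inv, e_mul, e_mul]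
  _ = e n l c := by ring_nf

/-- The candidate subgroup `{ t^l a^{α(n-1)^j} t^{-l} }`. -/
def K (j : ℕ) : Subgroup G where
  carrier := {x | ∃ (l : ℕ) (α : ℤ), x = e n l (α * (n-1)^j)}
  one_mem' := ⟨0, 0, by rw [zero_mul, e_one]⟩
  mul_mem' := by
    rintro x y ⟨l₁, α₁, rfl⟩ ⟨l₂, α₂, rfl⟩
    refine ⟨max l₁ l₂, n ^ (max l₁ l₂ - l₁) * α₁ + n ^ (max l₁ l₂ - l₂) * α₂, ?_⟩
    rw [e_shift n l₁ (max l₁ l₂ - l₁), e_shift n l₂ (max l₁ l₂ - l₂),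
      Nat.add_sub_cancel' (le_max_left l₁ l₂), Nat.add_sub_cancel' (le_max_right l₁ l₂),
      e_mul]
    congr 1
    ring
  inv_mem' := by
    rintro x ⟨l, α, rfl⟩
    exact ⟨l, -α, by rw [e_inv]; congr 1; ring⟩

lemma mem_K {j : ℕ} {x : G} : x ∈ K n j ↔ ∃ (l : ℕ) (α : ℤ), x = e n l (α * (n-1)^j) :=
  Iff.rfl

lemma K_normal (j : ℕ) : (K n j).Normal := by
  have hta : ∀ g ∈ K n j, a * g * (a)⁻¹ ∈ K n j := by
    rintro g ⟨l, α, rfl⟩; exact ⟨l, α, a_conj_e n l _⟩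
  have htai : ∀ g ∈ K n j, (a)⁻¹ * g * a ∈ K n j := by
    rintro g ⟨l, α, rfl⟩
    refine ⟨l, α, ?_⟩
    have := a_conj_e n l (α * (n-1)^j)
    calc (a)⁻¹ * e n l (α * (n-1)^j) * a
        = (a)⁻¹ * (a * e n l (α * (n-1)^j) * (a)⁻¹) * a := by rw [this]
      _ = e n l (α * (n-1)^j) := by group
  have htt : ∀ g ∈ K n j, t * g * (t)⁻¹ ∈ K n j := by
    rintro g ⟨l, α, rfl⟩; exact ⟨l + 1, α, t_conj_e n l _⟩
  have htti : ∀ g ∈ K n j, (t)⁻¹ * g * t ∈ K n j := by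
    rintro g ⟨l, α, rfl⟩
    cases l with
    | zero => exact ⟨0, n * α, by rw [tinv_conj_e_zero]; congr 1; ring⟩
    | succ k => exact ⟨k, α, by rw [tinv_conj_e_succ]⟩
  have hA : a ∈ Subgroup.normalizer (K n j : Set G) := by
    rw [Subgroup.mem_normalizer_iff]
    intro h
    constructor
    · intro hh; exact hta h hh
    · intro hh
      have h3 := htai _ hh
      have h2 : (a)⁻¹ * (a * h * (a)⁻¹) * a = h := by group
      rwa [h2] at h3
  have hT : t ∈ Subgroup.normalizer (K n j : Set G) := by
    rw [Subgroup.mem_normalizer_iff]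
    intro h
    constructor
    · intro hh; exact htt h hh
    · intro hh
      have h3 := htti _ hh
      have h2 : (t)⁻¹ * (t * h * (t)⁻¹) * t = h := by group
      rwa [h2] at h3
  constructor
  intro g hg x
  have hnorm : ∀ y : G, y ∈ Subgroup.normalizer (K n j : Set G) := by
    intro y
    refine PresentedGroup.generated_by _ _ ?_ y
    intro i
    fin_cases i
    · exact hA
    · exact hT
  exact (Subgroup.mem_normalizer_iff.1 (hnorm x) g).1 hg


lemma commutator_cases {N : Subgroup G} (hN : N.Normal) {g : G}
    (hga : ⁅g, a⁆ ∈ N) (hgt : ⁅g, (t)⁻¹⁆ ∈ N) (x : G) : ⁅g, x⁆ ∈ N := by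
  let T : Subgroup G := {
    carrier := {x | ⁅g, x⁆ ∈ N}
    one_mem' := by simp only [Set.mem_setOf_eq, commutatorElement_one_right]; exact one_mem N
    mul_mem' := by
      intro x y hx hy
      have h : ⁅g, x * y⁆ = ⁅g, x⁆ * (x * ⁅g, y⁆ * x⁻¹) := by
        simp only [commutatorElement_def]; group
      simp only [Set.mem_setOf_eq] at *
      rw [h]
      exact mul_mem hx (hN.conj_mem _ hy x)
    inv_mem' := by
      intro x hx
      have h : ⁅g, x⁻¹⁆ = x⁻¹ * ⁅g, x⁆⁻¹ * (x⁻¹)⁻¹ := by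
        simp only [commutatorElement_def]; group
      simp only [Set.mem_setOf_eq] at *
      rw [h]
      exact hN.conj_mem _ (inv_mem hx) x⁻¹ }
  have hmem : ∀ y : G, y ∈ T := by
    intro y
    refine PresentedGroup.generated_by _ _ ?_ y
    intro i
    fin_cases i
    · exact hga
    · have h1 : (t)⁻¹ ∈ T := hgt
      simpa [bst] using inv_mem h1
  exact hmem x

lemma commutator_all {N : Subgroup G} (hN : N.Normal)
    (hA : ∀ x : G, ⁅a, x⁆ ∈ N) (hT : ∀ x : G, ⁅t, x⁆ ∈ N) (g x : G) : ⁅g, x⁆ ∈ N := by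
  let S : Subgroup G := {
    carrier := {g | ∀ x : G, ⁅g, x⁆ ∈ N}
    one_mem' := by
      intro x
      simp only [commutatorElement_one_left]
      exact one_mem N
    mul_mem' := by
      intro p q hp hq x
      have h : ⁅p * q, x⁆ = (p * ⁅q, x⁆ * p⁻¹) * ⁅p, x⁆ := by
        simp only [commutatorElement_def]; group
      rw [h]
      exact mul_mem (hN.conj_mem _ (hq x) p) (hp x)
    inv_mem' := by
      intro p hp x
      have h : ⁅p⁻¹, x⁆ = p⁻¹ * ⁅p, x⁆⁻¹ * (p⁻¹)⁻¹ := by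
        simp only [commutatorElement_def]; group
      rw [h]
      exact hN.conj_mem _ (inv_mem (hp x)) p⁻¹ }
  have hmem : ∀ y : G, y ∈ S := by
    intro y
    refine PresentedGroup.generated_by _ _ ?_ y
    intro i
    fin_cases i
    · exact hA
    · exact hT
  exact hmem g x

lemma comm_a_tinv : ⁅a, (t)⁻¹⁆ = e n 0 ((-1) * (n - 1) ^ 1) := by
  have h : ⁅a, (t)⁻¹⁆ = bsa 1 n ^ (1:ℤ) * ((t)⁻¹ * bsa 1 n ^ (-1:ℤ) * t) := by
    simp only [commutatorElement_def]; group
  rw [h, conj1, ← zpow_add]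
  unfold e
  simp only [Nat.cast_zero, neg_zero, zpow_zero, one_mul, mul_one]
  congr 1
  ring

lemma base_case (g x : G) : ⁅g, x⁆ ∈ K n 1 := by
  refine commutator_all n (K_normal n 1) ?_ ?_ g x
  · intro x
    refine commutator_cases n (K_normal n 1) ?_ ?_ x
    · have h : ⁅a, a⁆ = 1 := by simp only [commutatorElement_def]; group
      rw [h]; exact one_mem _
    · exact ⟨0, -1, comm_a_tinv n⟩
  · intro x
    refine commutator_cases n (K_normal n 1) ?_ ?_ x
    · have h : ⁅t, a⁆ = t * ⁅a, (t)⁻¹⁆ * (t)⁻¹ := by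
        simp only [commutatorElement_def]; group
      rw [h]
      exact (K_normal n 1).conj_mem _ ⟨0, -1, comm_a_tinv n⟩ t
    · have h : ⁅t, (t)⁻¹⁆ = 1 := by simp only [commutatorElement_def]; group
      rw [h]; exact one_mem _

lemma step_case (j : ℕ) {g : G} (hg : g ∈ K n j) (x : G) : ⁅g, x⁆ ∈ K n (j + 1) := by
  obtain ⟨l, α, rfl⟩ := hg
  refine commutator_cases n (K_normal n (j+1)) ?_ ?_ x
  · have hc : e n l (α * (n-1)^j) * a = a * e n l (α * (n-1)^j) :=
      (mul_inv_eq_iff_eq_mul.1 (a_conj_e n l (α * (n-1)^j))).symm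
    rw [commutatorElement_eq_one_iff_mul_comm.2 hc]
    exact one_mem _
  · have h : ⁅e n l (α * (n-1)^j), (t)⁻¹⁆ =
        bst 1 n ^ (l:ℤ) * (bsa 1 n ^ (α * (n-1)^j) *
          ((t)⁻¹ * bsa 1 n ^ (-(α * (n-1)^j)) * t)) * bst 1 n ^ (-(l:ℤ)) := by
      simp only [commutatorElement_def]; unfold e; group
    rw [h, conj1, ← zpow_add]
    refine ⟨l, -α, ?_⟩
    unfold e
    congr 2
    ring

lemma LCS_le (j : ℕ) (hj : 1 ≤ j) : (⊤ : Subgroup G).lowerCentralSeries j ≤ K n j := by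
  induction j, hj using Nat.le_induction with
  | base =>
      have h1 : (⊤ : Subgroup G).lowerCentralSeries 1 = ⁅(⊤ : Subgroup G), ⊤⁆ := rfl
      rw [h1]
      exact Subgroup.commutator_le.2 fun g _ x _ => base_case n g x
  | succ j hj ih =>
      have h1 : (⊤ : Subgroup G).lowerCentralSeries (j+1) = ⁅(⊤ : Subgroup G).lowerCentralSeries j, ⊤⁆ := rfl
      rw [h1]
      exact Subgroup.commutator_le.2 fun g hg x _ => step_case n j (ih hg) x

lemma apow_mem (j : ℕ) (hj : 1 ≤ j) :
    bsa 1 n ^ ((n-1)^j) ∈ (⊤ : Subgroup G).lowerCentralSeries j := by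
  induction j, hj using Nat.le_induction with
  | base =>
      have h : ⁅(t)⁻¹, a⁆ = bsa 1 n ^ ((n-1)^1) := by
        have h2 : ⁅(t)⁻¹, a⁆ = ((t)⁻¹ * bsa 1 n ^ (1:ℤ) * t) * bsa 1 n ^ (-1:ℤ) := by
          simp only [commutatorElement_def]; group
        rw [h2, conj1, ← zpow_add]
        congr 1
        ring
      rw [← h]
      exact Subgroup.commutator_mem_commutator (Subgroup.mem_top _) (Subgroup.mem_top _)
  | succ j hj ih =>
      have h : ⁅bsa 1 n ^ ((n-1)^j), (t)⁻¹⁆ = bsa 1 n ^ (-((n-1)^(j+1))) := by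
        have h2 : ⁅bsa 1 n ^ ((n-1)^j), (t)⁻¹⁆ =
            bsa 1 n ^ ((n-1)^j) * ((t)⁻¹ * bsa 1 n ^ (-((n-1)^j)) * t) := by
          simp only [commutatorElement_def]; group
        rw [h2, conj1, ← zpow_add]
        congr 1
        ring
      have hmem : ⁅bsa 1 n ^ ((n-1)^j), (t)⁻¹⁆ ∈ (⊤ : Subgroup G).lowerCentralSeries (j+1) :=
        Subgroup.commutator_mem_commutator ih (Subgroup.mem_top _)
      rw [h] at hmem
      have h3 := inv_mem hmem
      rwa [← zpow_neg, neg_neg] at h3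

end BSaux


/-- Let `G = BS(1,n)` with `n ≠ 1` (and `n ≠ 0`). For every `i > 1` (written `i = j + 1`
with `j ≥ 1`; note `γ_{j+1} G = (⊤ : Subgroup G).lowerCentralSeries j` in Mathlib's 0-based indexing),
the term `γ_{j+1} G` consists exactly of the elements `t^l * a^(α * (n-1)^j) * t^(-l)`
with `l ∈ ℕ` and `α ∈ ℤ`. -/
theorem bs_one_n_lowerCentralSeries_mem (n : ℤ) (hn0 : n ≠ 0) (hn1 : n ≠ 1)
    (j : ℕ) (hj : 1 ≤ j) (x : BS 1 n) :
    x ∈ (⊤ : Subgroup (BS 1 n)).lowerCentralSeries j ↔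
      ∃ (l : ℕ) (α : ℤ),
        x = bst 1 n ^ (l : ℤ) * bsa 1 n ^ (α * (n - 1) ^ j) * bst 1 n ^ (-(l : ℤ)) := by
  constructor
  · intro hx
    obtain ⟨l, α, h⟩ := BSaux.LCS_le n j hj hx
    exact ⟨l, α, h⟩
  · rintro ⟨l, α, rfl⟩
    have h1 := BSaux.apow_mem n j hj
    have h2 : bsa 1 n ^ (α * (n-1)^j) ∈ (⊤ : Subgroup (BS 1 n)).lowerCentralSeries j := by
      have h4 := Subgroup.zpow_mem _ h1 α
      rw [← zpow_mul] at h4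
      convert h4 using 2
      ring
    have h3 := (Subgroup.lowerCentralSeries_normal ⊤ j).conj_mem _ h2 (bst 1 n ^ (l:ℤ))
    rwa [← zpow_neg] at h3
end

section
/- For m > 1, the natural surjection BS(m,m) → ℤ * ℤ/mℤ sending a^m to 1 induces isomorphisms γ_i(BS(m,m)) ≅ γ_i(ℤ * ℤ/mℤ) for all i > 1. -/
/-- The relation \`a^m = 1\` defining the free product \`ℤ * ℤ/mℤ = ⟨a, t ∣ aᵐ⟩\`. -/
def FPrels (m : ℤ) : Set (FreeGroup (Fin 2)) := {(FreeGroup.of 0) ^ m}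

/-- The free product \`ℤ * ℤ/mℤ\`, presented as \`⟨a, t ∣ aᵐ = 1⟩\`. -/
abbrev FP (m : ℤ) : Type := PresentedGroup (FPrels m)

/-- The generator \`a\` (of order \`m\`) of \`ℤ * ℤ/mℤ\`. -/
def fpa (m : ℤ) : FP m := PresentedGroup.of 0

/-- The generator \`t\` (of infinite order) of \`ℤ * ℤ/mℤ\`. -/
def fpt (m : ℤ) : FP m := PresentedGroup.of 1

/-- Lower central series maps onto lower central series under a surjective hom. -/
private lemma lcs_map_of_surjective {G H : Type*} [Group G] [Group H] {f : G →* H}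
    (hf : Function.Surjective f) (n : ℕ) :
    ((⊤ : Subgroup G).lowerCentralSeries n).map f = (⊤ : Subgroup H).lowerCentralSeries n := by
  induction n with
  | zero => simpa using Subgroup.map_top_of_surjective f hf
  | succ n ih =>
    show Subgroup.map f ⁅(⊤ : Subgroup G).lowerCentralSeries n, ⊤⁆ = ⁅(⊤ : Subgroup H).lowerCentralSeries n, ⊤⁆
    rw [Subgroup.map_commutator, ih, Subgroup.map_top_of_surjective f hf]

/-- In any commutative group, `x⁻¹ * y * x * y⁻¹ = 1`. -/
private lemma comm_aux {A : Type*} [CommGroup A] (x y : A) : x⁻¹ * y * x * y⁻¹ = 1 := by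
  rw [mul_comm x⁻¹ y]; group

set_option maxHeartbeats 2000000 in
/-- For `m > 1`, the natural surjection `BS(m,m) → ℤ * ℤ/mℤ` (sending `a ↦ a`, `t ↦ t`,
and thus killing `aᵐ`) induces isomorphisms `γ_i(BS(m,m)) ≅ γ_i(ℤ * ℤ/mℤ)` for all
`i > 1` (i.e. `lowerCentralSeries` indices `j ≥ 1`): it maps `γ_i` onto `γ_i` and is
injective on `γ_i`. -/
theorem bs_m_m_lcs_iso (m : ℤ) (hm : 1 < m) :
    ∃ φ : BS m m →* FP m,
      φ (bsa m m) = fpa m ∧ φ (bst m m) = fpt m ∧ Function.Surjective φ ∧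
      ∀ j : ℕ, 1 ≤ j →
        ((⊤ : Subgroup (BS m m)).lowerCentralSeries j).map φ = (⊤ : Subgroup (FP m)).lowerCentralSeries j ∧
        Set.InjOn φ ((⊤ : Subgroup (BS m m)).lowerCentralSeries j) := by
  classical
  -- the relation a^m = 1 in FP
  have hfpa : (fpa m) ^ m = 1 := by
    have hmem : ((FreeGroup.of (0 : Fin 2)) ^ m) ∈ Subgroup.normalClosure (FPrels m) :=
      Subgroup.subset_normalClosure rfl
    show ((PresentedGroup.mk (FPrels m)) (FreeGroup.of 0)) ^ m = 1
    rw [← map_zpow]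
    exact (QuotientGroup.eq_one_iff _).mpr hmem
  set f : Fin 2 → FP m := fun i => if i = 0 then fpa m else fpt m with hf
  have hrel : ∀ r ∈ BSrels m m, FreeGroup.lift f r = 1 := by
    rintro r rfl
    simp [map_mul, map_inv, map_zpow, hf, hfpa]
  set φ : BS m m →* FP m := PresentedGroup.toGroup hrel with hφdef
  have hφa : φ (bsa m m) = fpa m := PresentedGroup.toGroup.of hrel
  have hφt : φ (bst m m) = fpt m := by
    show φ (PresentedGroup.of 1) = fpt m
    rw [hφdef, PresentedGroup.toGroup.of hrel]
    simp [hf]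
  -- surjectivity
  have hsurj : Function.Surjective φ := by
    rw [← MonoidHom.range_eq_top, ← top_le_iff,
      ← PresentedGroup.closure_range_of (FPrels m), Subgroup.closure_le]
    rintro x ⟨i, rfl⟩
    fin_cases i
    · exact ⟨bsa m m, hφa⟩
    · exact ⟨bst m m, hφt⟩
  -- φ ∘ mk = mk
  have hcomp : φ.comp (PresentedGroup.mk (BSrels m m)) = PresentedGroup.mk (FPrels m) := by
    apply FreeGroup.ext_hom
    intro i
    show φ (PresentedGroup.of i) = PresentedGroup.of i
    fin_cases i
    · exact hφa
    · exact hφt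
  -- a^m commutes with t in BS
  have hcomm_t : Commute ((bsa m m) ^ m) (bst m m) := by
    have e1 : (bsa m m) ^ m = PresentedGroup.mk (BSrels m m) ((FreeGroup.of 0) ^ m) :=
      (map_zpow _ _ _).symm
    have e2 : bst m m = PresentedGroup.mk (BSrels m m) (FreeGroup.of 1) := rfl
    rw [Commute, SemiconjBy, e1, e2, ← map_mul, ← map_mul]
    apply QuotientGroup.eq.mpr
    have hw : ((FreeGroup.of (0:Fin 2)) ^ m * FreeGroup.of 1)⁻¹ *
        (FreeGroup.of 1 * (FreeGroup.of 0) ^ m) =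
        ((FreeGroup.of 0) ^ m)⁻¹ *
          ((FreeGroup.of 1)⁻¹ * (FreeGroup.of 0) ^ m * FreeGroup.of 1 *
            ((FreeGroup.of 0) ^ m)⁻¹)⁻¹ * (((FreeGroup.of 0) ^ m)⁻¹)⁻¹ := by
      group
    rw [hw]
    exact Subgroup.Normal.conj_mem (Subgroup.normalClosure_normal (s := BSrels m m))
      (((FreeGroup.of 1)⁻¹ * (FreeGroup.of 0) ^ m * FreeGroup.of 1 *
        ((FreeGroup.of 0) ^ m)⁻¹)⁻¹)
      (Subgroup.inv_mem _ (Subgroup.subset_normalClosure rfl))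
      (((FreeGroup.of 0) ^ m)⁻¹)
  -- a^m is central in BS
  have hcent : ∀ g : BS m m, Commute ((bsa m m) ^ m) g := by
    intro g
    have hg : g ∈ Subgroup.closure (Set.range (PresentedGroup.of : Fin 2 → BS m m)) := by
      rw [PresentedGroup.closure_range_of]; trivial
    induction hg using Subgroup.closure_induction with
    | mem x hx =>
      obtain ⟨i, rfl⟩ := hx
      fin_cases i
      · exact (Commute.refl (bsa m m)).zpow_left m
      · exact hcomm_t
    | one => exact Commute.one_right _
    | mul x y _ _ hx hy => exact hx.mul_right hy
    | inv x _ hx => exact hx.inv_right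
  -- zpowers of a^m is normal
  have hZ : (Subgroup.zpowers ((bsa m m) ^ m)).Normal := by
    constructor
    intro n hn g
    rcases hn with ⟨k, rfl⟩
    have hc : ((bsa m m) ^ m) ^ k * g = g * ((bsa m m) ^ m) ^ k := ((hcent g).zpow_left k).eq
    have : g * ((bsa m m) ^ m) ^ k * g⁻¹ = ((bsa m m) ^ m) ^ k := by
      rw [← hc]; group
    rw [this]
    exact ⟨k, rfl⟩
  -- kernel of φ is contained in zpowers of a^m
  have hker : φ.ker ≤ Subgroup.zpowers ((bsa m m) ^ m) := by
    have hmap : (Subgroup.normalClosure (FPrels m)).map (PresentedGroup.mk (BSrels m m)) ≤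
        Subgroup.zpowers ((bsa m m) ^ m) := by
      rw [Subgroup.map_normalClosure _ _ (PresentedGroup.mk_surjective _)]
      refine Subgroup.normalClosure_le_normal ?_
      rintro y ⟨w, rfl, rfl⟩
      rw [map_zpow]
      exact Subgroup.mem_zpowers _
    intro x hx
    obtain ⟨w, rfl⟩ := PresentedGroup.mk_surjective (BSrels m m) x
    have hx' : φ (PresentedGroup.mk (BSrels m m) w) = 1 := hx
    rw [← MonoidHom.comp_apply, hcomp] at hx'
    have hwmem : w ∈ Subgroup.normalClosure (FPrels m) := (QuotientGroup.eq_one_iff w).mp hx'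
    exact hmap ⟨w, hwmem, rfl⟩
  -- abelianization homomorphism
  set ab : Fin 2 → Multiplicative (ℤ × ℤ) :=
    fun i => Multiplicative.ofAdd (if i = 0 then ((1 : ℤ), (0 : ℤ)) else (0, 1)) with hab
  have hrel2 : ∀ r ∈ BSrels m m, FreeGroup.lift ab r = 1 := by
    rintro r rfl
    simp only [map_mul, map_inv, map_zpow, FreeGroup.lift_apply_of]
    exact comm_aux _ _
  set ψ : BS m m →* Multiplicative (ℤ × ℤ) := PresentedGroup.toGroup hrel2 with hψdef
  have hψa : ψ (bsa m m) = Multiplicative.ofAdd ((1 : ℤ), (0 : ℤ)) := by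
    refine (PresentedGroup.toGroup.of hrel2 (x := (0 : Fin 2))).trans ?_
    rw [hab]; norm_num
  -- injectivity on the commutator subgroup
  have hinj : ∀ x ∈ (⊤ : Subgroup (BS m m)).lowerCentralSeries 1, φ x = 1 → x = 1 := by
    intro x hx hx1
    obtain ⟨k, hk0⟩ := hker (show x ∈ φ.ker from hx1)
    have hk : (bsa m m ^ m) ^ k = x := hk0
    have hψx : ψ x = 1 := by
      have hle : (⊤ : Subgroup (BS m m)).lowerCentralSeries 1 ≤ ψ.ker := by
        rw [Subgroup.top_lowerCentralSeries_one]
        exact Abelianization.commutator_subset_ker ψ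
      exact hle hx
    rw [← hk, ← zpow_mul, map_zpow, hψa] at hψx
    have hmk : m * k = 0 := by
      have h2 := congrArg Multiplicative.toAdd hψx
      simp only [toAdd_zpow, toAdd_ofAdd, toAdd_one, Prod.smul_mk, smul_eq_mul, mul_one,
        mul_zero, Prod.mk_eq_zero] at h2
      exact h2.1
    have hk0 : k = 0 := by
      rcases mul_eq_zero.mp hmk with h | h
      · omega
      · exact h
    rw [← hk, hk0, zpow_zero]
  refine ⟨φ, hφa, hφt, hsurj, fun j hj => ⟨lcs_map_of_surjective hsurj j, ?_⟩⟩
  intro x hx y hy hxy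
  have hx' : x ∈ (⊤ : Subgroup (BS m m)).lowerCentralSeries 1 := (⊤ : Subgroup (BS m m)).lowerCentralSeries_antitone hj hx
  have hy' : y ∈ (⊤ : Subgroup (BS m m)).lowerCentralSeries 1 := (⊤ : Subgroup (BS m m)).lowerCentralSeries_antitone hj hy
  have h1 : φ (x * y⁻¹) = 1 := by rw [map_mul, map_inv, hxy, mul_inv_cancel]
  have h2 := hinj (x * y⁻¹) (mul_mem hx' (inv_mem hy')) h1
  exact mul_inv_eq_one.mp h2
end

section
/- For m > 1, in G = BS(m,-m), the i-th lower central subgroup decomposes as a direct product γ_iG ≅ ⟨a^{2^{i-1}m}⟩ × γ_i(ℤ * ℤ/mℤ) for all i > 1, where ⟨a^{2^{i-1}m}⟩ is infinite cyclic. -/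
section Helpers

variable {G : Type*} [Group G]

private lemma conj_zpow'' (g x : G) (z : ℤ) : (g * x * g⁻¹) ^ z = g * x ^ z * g⁻¹ := by
  induction z using Int.induction_on with
  | zero => simp
  | succ k ih => rw [zpow_add_one, ih, zpow_add_one]; group
  | pred k ih => rw [zpow_sub_one, ih, zpow_sub_one]; group

private lemma mk_rel_eq_one {α : Type*} {rels : Set (FreeGroup α)} {r : FreeGroup α}
    (h : r ∈ rels) : PresentedGroup.mk rels r = 1 := by
  have : r ∈ Subgroup.normalClosure rels := Subgroup.subset_normalClosure h
  exact (QuotientGroup.eq_one_iff r).mpr this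

end Helpers


open scoped commutatorElement

private lemma lcs_succ_comm {G : Type*} [Group G] (n : ℕ) :
    (⊤ : Subgroup G).lowerCentralSeries (n + 1) = ⁅(⊤ : Subgroup G).lowerCentralSeries n, (⊤ : Subgroup G)⁆ := rfl

private lemma commutator_mem_lcs_succ {G : Type*} [Group G] {n : ℕ} {x : G} (y : G)
    (hx : x ∈ (⊤ : Subgroup G).lowerCentralSeries n) : ⁅x, y⁆ ∈ (⊤ : Subgroup G).lowerCentralSeries (n + 1) := by
  rw [lcs_succ_comm]
  exact Subgroup.commutator_mem_commutator hx (Subgroup.mem_top y)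


section Helpers1

variable {G : Type*} [Group G]

private lemma lcs_map_eq {G H : Type*} [Group G] [Group H] (f : G →* H)
    (hf : Function.Surjective f) : ∀ n, ((⊤ : Subgroup G).lowerCentralSeries n).map f = (⊤ : Subgroup H).lowerCentralSeries n
  | 0 => by simpa using Subgroup.map_top_of_surjective f hf
  | (n + 1) => by
      rw [lcs_succ_comm, lcs_succ_comm, Subgroup.map_commutator, lcs_map_eq f hf n,
        Subgroup.map_top_of_surjective f hf]

private lemma exists_section {E Q : Type*} [Group E] [Group Q] [IsFreeGroup Q] (q : E →* Q)
    (hq : Function.Surjective q) : ∃ s : Q →* E, ∀ y, q (s y) = y := by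
  choose g hg using hq
  refine ⟨IsFreeGroup.lift (fun b => g (IsFreeGroup.of b)), fun y => ?_⟩
  have h : q.comp (IsFreeGroup.lift (fun b => g (IsFreeGroup.of b))) = MonoidHom.id Q := by
    apply IsFreeGroup.ext_hom
    intro a
    simp [hg]
  calc q (IsFreeGroup.lift (fun b => g (IsFreeGroup.of b)) y)
      = (q.comp (IsFreeGroup.lift (fun b => g (IsFreeGroup.of b)))) y := rfl
    _ = y := by rw [h]; rfl

/-- `Multiplicative ℤ` is isomorphic to the zpowers of an element of infinite order. -/
private noncomputable def zpowEquivZpowers {x : G} (hx : ¬ IsOfFinOrder x) :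
    Multiplicative ℤ ≃* Subgroup.zpowers x := by
  refine MulEquiv.ofBijective
    ((MonoidHom.mk' (fun n : Multiplicative ℤ => x ^ n.toAdd) (fun a b => by
        simp [zpow_add])).codRestrict (Subgroup.zpowers x)
        (fun n => Subgroup.mem_zpowers_iff.mpr ⟨n.toAdd, rfl⟩)) ⟨?_, ?_⟩
  · intro a b hab
    have h : x ^ a.toAdd = x ^ b.toAdd := congrArg Subtype.val hab
    exact injective_zpow_iff_not_isOfFinOrder.mpr hx h
  · rintro ⟨y, hy⟩
    obtain ⟨k, hk⟩ := Subgroup.mem_zpowers_iff.mp hy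
    exact ⟨Multiplicative.ofAdd k, Subtype.ext hk⟩

/-- A surjection with homomorphic section and central kernel yields a product decomposition. -/
private noncomputable def splitIso {E Q : Type*} [Group E] [Group Q] (q : E →* Q) (s : Q →* E)
    (hs : ∀ y, q (s y) = y) (hc : ∀ x y : E, q x = 1 → x * y = y * x) :
    E ≃* q.ker × Q where
  toFun x := (⟨x * (s (q x))⁻¹, by
      simp [MonoidHom.mem_ker, hs]⟩, q x)
  invFun p := (p.1 : E) * s p.2
  left_inv x := by simp
  right_inv p := by
    obtain ⟨⟨x, hx⟩, y⟩ := p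
    have hx' : q x = 1 := hx
    ext
    · simp [hx', hs]
    · simp [hx', hs]
  map_mul' x y := by
    have h1 : q (y * (s (q y))⁻¹) = 1 := by simp [hs]
    ext
    · show (x * y) * (s (q (x * y)))⁻¹ = (x * (s (q x))⁻¹) * (y * (s (q y))⁻¹)
      have h2 := hc (y * (s (q y))⁻¹) ((s (q x))⁻¹) h1
      calc (x * y) * (s (q (x*y)))⁻¹ = x * ((y * (s (q y))⁻¹) * (s (q x))⁻¹) := by
            rw [show q (x*y) = q x * q y from map_mul q x y,
               show s (q x * q y) = s (q x) * s (q y) from map_mul s _ _, mul_inv_rev]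
            group
        _ = x * ((s (q x))⁻¹ * (y * (s (q y))⁻¹)) := by rw [h2]
        _ = (x * (s (q x))⁻¹) * (y * (s (q y))⁻¹) := by group
    · show q (x * y) = q x * q y
      simp

end Helpers1

namespace BSAux

variable (m : ℤ)

/-- short name for `a^m` in `BS(m,-m)`. -/
noncomputable def A : BS m (-m) := bsa m (-m) ^ m

lemma fpa_zpow_m : fpa m ^ m = 1 := by
  have h1 : fpa m ^ m = PresentedGroup.mk (FPrels m) ((FreeGroup.of 0) ^ m) := by
    rw [map_zpow]; rfl
  rw [h1]
  exact mk_rel_eq_one rfl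

lemma bs_rel : (bst m (-m))⁻¹ * bsa m (-m) ^ m * bst m (-m) * (bsa m (-m) ^ (-m))⁻¹ = 1 := by
  have h1 : (bst m (-m))⁻¹ * bsa m (-m) ^ m * bst m (-m) * (bsa m (-m) ^ (-m))⁻¹ =
      PresentedGroup.mk (BSrels m (-m))
        ((FreeGroup.of 1)⁻¹ * (FreeGroup.of 0) ^ m * (FreeGroup.of 1) *
          ((FreeGroup.of 0) ^ (-m))⁻¹) := by
    simp only [map_mul, map_inv, map_zpow]; rfl
  rw [h1]
  exact mk_rel_eq_one rfl

lemma tinv_conj : (bst m (-m))⁻¹ * A m * bst m (-m) = (A m)⁻¹ := by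
  have h := bs_rel m
  rw [zpow_neg, inv_inv] at h
  exact mul_eq_one_iff_eq_inv.mp h

lemma t_conj : bst m (-m) * A m * (bst m (-m))⁻¹ = (A m)⁻¹ := by
  have h := tinv_conj m
  have h2 : A m = bst m (-m) * (A m)⁻¹ * (bst m (-m))⁻¹ := by
    rw [← h]; group
  calc bst m (-m) * A m * (bst m (-m))⁻¹
      = (bst m (-m) * (A m)⁻¹ * (bst m (-m))⁻¹)⁻¹ := by group
    _ = (A m)⁻¹ := by rw [← h2]

lemma t_conj_zpow (k : ℤ) : bst m (-m) * (A m) ^ k * (bst m (-m))⁻¹ = (A m) ^ (-k) := by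
  have : (bst m (-m) * A m * (bst m (-m))⁻¹) ^ k = bst m (-m) * (A m) ^ k * (bst m (-m))⁻¹ :=
    conj_zpow'' _ _ _
  rw [← this, t_conj, ← zpow_neg_one, ← zpow_mul, neg_one_mul]

/-- the sign homomorphism `BS(m,-m) → ℤˣ`, `a ↦ 1`, `t ↦ -1`. -/
noncomputable def φsign : BS m (-m) →* ℤˣ :=
  PresentedGroup.toGroup (f := fun i => ![(1 : ℤˣ), (-1 : ℤˣ)] i) (by
    rintro r hr
    simp only [BSrels, Set.mem_singleton_iff] at hr
    subst hr
    simp)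

@[simp] lemma φsign_bsa : φsign m (bsa m (-m)) = 1 := by
  unfold bsa φsign
  rw [show (PresentedGroup.of 0 : BS m (-m)) = PresentedGroup.of 0 from rfl]
  exact PresentedGroup.toGroup.of _

@[simp] lemma φsign_bst : φsign m (bst m (-m)) = -1 := by
  unfold bst φsign
  exact PresentedGroup.toGroup.of _

/-- subgroup of elements `g` with `g (a^m) g⁻¹ = (a^m)^{φsign g}`. -/
noncomputable def conjS : Subgroup (BS m (-m)) where
  carrier := {g | g * A m * g⁻¹ = A m ^ ((φsign m g : ℤˣ) : ℤ)}
  one_mem' := by simp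
  mul_mem' := by
    intro g h hg hh
    simp only [Set.mem_setOf_eq] at hg hh ⊢
    have : (g * h) * A m * (g * h)⁻¹ = g * (h * A m * h⁻¹) * g⁻¹ := by group
    rw [this, hh, show A m ^ ((φsign m h : ℤˣ) : ℤ) =
        A m ^ ((φsign m h : ℤˣ) : ℤ) from rfl]
    have h2 : g * A m ^ ((φsign m h : ℤˣ) : ℤ) * g⁻¹ =
        (g * A m * g⁻¹) ^ ((φsign m h : ℤˣ) : ℤ) := (conj_zpow'' _ _ _).symm
    rw [h2, hg, ← zpow_mul, map_mul]
    push_cast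
    ring_nf
  inv_mem' := by
    intro g hg
    have hg' : g * A m * g⁻¹ = A m ^ ((φsign m g : ℤˣ) : ℤ) := hg
    show g⁻¹ * A m * g⁻¹⁻¹ = A m ^ ((φsign m g⁻¹ : ℤˣ) : ℤ)
    rw [inv_inv, map_inv]
    rcases Int.units_eq_one_or (φsign m g) with h1 | h1 <;> rw [h1] at hg' ⊢
    · simp only [inv_one, Units.val_one, zpow_one] at hg' ⊢
      have h5 : g⁻¹ * (g * A m * g⁻¹) * g = A m := by group
      rw [hg'] at h5
      exact h5
    · simp only [inv_neg, inv_one, Units.val_neg, Units.val_one, zpow_neg, zpow_one] at hg' ⊢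
      have h5 : g⁻¹ * (g * A m * g⁻¹) * g = A m := by group
      rw [hg'] at h5
      have h7 : (g⁻¹ * (A m)⁻¹ * g)⁻¹ = (A m)⁻¹ := by rw [h5]
      calc g⁻¹ * A m * g = (g⁻¹ * (A m)⁻¹ * g)⁻¹ := by group
        _ = (A m)⁻¹ := h7

lemma all_conj (g : BS m (-m)) : g * A m * g⁻¹ = A m ^ ((φsign m g : ℤˣ) : ℤ) := by
  have : g ∈ conjS m := by
    apply PresentedGroup.generated_by (BSrels m (-m)) (conjS m)
    intro j
    fin_cases j
    · show bsa m (-m) ∈ conjS m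
      have hc : Commute (bsa m (-m)) (A m) := (Commute.refl _).zpow_right m
      show bsa m (-m) * A m * (bsa m (-m))⁻¹ = A m ^ ((φsign m (bsa m (-m)) : ℤˣ) : ℤ)
      rw [φsign_bsa]
      have h9 : A m ^ ((1 : ℤˣ) : ℤ) = A m := by norm_num
      rw [h9, hc.eq]
      group
    · show bst m (-m) ∈ conjS m
      show bst m (-m) * A m * (bst m (-m))⁻¹ = A m ^ ((φsign m (bst m (-m)) : ℤˣ) : ℤ)
      rw [φsign_bst, t_conj]
      simp
  exact this

instance zpA_normal : (Subgroup.zpowers (A m)).Normal := by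
  constructor
  intro n hn g
  obtain ⟨k, rfl⟩ := Subgroup.mem_zpowers_iff.mp hn
  have : g * (A m) ^ k * g⁻¹ = (g * A m * g⁻¹) ^ k := (conj_zpow'' _ _ _).symm
  rw [this, all_conj, ← zpow_mul]
  exact Subgroup.mem_zpowers_iff.mpr ⟨_, rfl⟩

/-- the projection `BS(m,-m) → ℤ * ℤ/m`. -/
noncomputable def π : BS m (-m) →* FP m :=
  PresentedGroup.toGroup (f := fun i => ![fpa m, fpt m] i) (by
    rintro r hr
    simp only [BSrels, Set.mem_singleton_iff] at hr
    subst hr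
    have h1 : (FreeGroup.lift fun i => ![fpa m, fpt m] i) (FreeGroup.of 0) = fpa m := by
      simp
    have h2 : (FreeGroup.lift fun i => ![fpa m, fpt m] i) (FreeGroup.of 1) = fpt m := by
      simp
    simp only [map_mul, map_inv, map_zpow, h1, h2]
    rw [fpa_zpow_m, zpow_neg, fpa_zpow_m]
    simp)

@[simp] lemma π_bsa : π m (bsa m (-m)) = fpa m := PresentedGroup.toGroup.of _

@[simp] lemma π_bst : π m (bst m (-m)) = fpt m := PresentedGroup.toGroup.of _

lemma π_mk : (π m).comp (PresentedGroup.mk (BSrels m (-m))) = PresentedGroup.mk (FPrels m) := by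
  apply FreeGroup.ext_hom
  intro i
  fin_cases i
  · exact π_bsa m
  · exact π_bst m

lemma π_surj : Function.Surjective (π m) := by
  intro y
  have : y ∈ (π m).range := by
    apply PresentedGroup.generated_by (FPrels m) (π m).range
    intro j
    fin_cases j
    · exact ⟨bsa m (-m), π_bsa m⟩
    · exact ⟨bst m (-m), π_bst m⟩
  exact this

lemma ker_π : (π m).ker = Subgroup.zpowers (A m) := by
  apply le_antisymm
  · intro x hx
    obtain ⟨w, rfl⟩ := PresentedGroup.mk_surjective (BSrels m (-m)) x
    have hx' : PresentedGroup.mk (FPrels m) w = 1 := by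
      rw [← π_mk]
      exact hx
    have hw : w ∈ Subgroup.normalClosure (FPrels m) := (QuotientGroup.eq_one_iff w).mp hx'
    have hmem : PresentedGroup.mk (BSrels m (-m)) w ∈
        (Subgroup.normalClosure (FPrels m)).map (PresentedGroup.mk (BSrels m (-m))) :=
      Subgroup.mem_map_of_mem _ hw
    rw [Subgroup.map_normalClosure _ _ (PresentedGroup.mk_surjective _)] at hmem
    have himg : (PresentedGroup.mk (BSrels m (-m))) '' (FPrels m) = {A m} := by
      unfold FPrels
      rw [Set.image_singleton, map_zpow]
      rfl
    rw [himg] at hmem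
    have : Subgroup.normalClosure {A m} ≤ Subgroup.zpowers (A m) :=
      Subgroup.normalClosure_le_normal (by
        intro z hz
        rw [Set.mem_singleton_iff] at hz
        subst hz
        exact Subgroup.mem_zpowers _)
    exact this hmem
  · have : A m ∈ (π m).ker := by
      show π m (A m) = 1
      unfold A
      rw [map_zpow, π_bsa, fpa_zpow_m]
    rwa [← Subgroup.zpowers_le] at this

/-- homomorphism to the infinite dihedral group detecting that `a` has infinite order. -/
noncomputable def Λdih : BS m (-m) →* DihedralGroup 0 :=
  PresentedGroup.toGroup (f := fun i => ![DihedralGroup.r (1 : ZMod 0), DihedralGroup.sr 0] i) (by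
    rintro r hr
    simp only [BSrels, Set.mem_singleton_iff] at hr
    subst hr
    have h1 : (FreeGroup.lift fun i => ![DihedralGroup.r (1 : ZMod 0), DihedralGroup.sr 0] i)
        (FreeGroup.of 0) = DihedralGroup.r 1 := by simp
    have h2 : (FreeGroup.lift fun i => ![DihedralGroup.r (1 : ZMod 0), DihedralGroup.sr 0] i)
        (FreeGroup.of 1) = DihedralGroup.sr 0 := by simp
    simp only [map_mul, map_inv, map_zpow, h1, h2]
    have hrot : ∀ z : ℤ, ∃ i : ZMod 0, DihedralGroup.r (1 : ZMod 0) ^ z = DihedralGroup.r i := by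
      intro z
      induction z using Int.induction_on with
      | zero => exact ⟨0, by rw [zpow_zero, DihedralGroup.one_def]⟩
      | succ k ih =>
          obtain ⟨i, hi⟩ := ih
          exact ⟨i + 1, by rw [zpow_add_one, hi, DihedralGroup.r_mul_r]⟩
      | pred k ih =>
          obtain ⟨i, hi⟩ := ih
          refine ⟨i + (-1), ?_⟩
          have hinv : (DihedralGroup.r (1 : ZMod 0))⁻¹ = DihedralGroup.r (-1) := by
            apply inv_eq_of_mul_eq_one_right
            rw [DihedralGroup.r_mul_r]
            rw [DihedralGroup.one_def]; congr 1
          rw [zpow_sub_one, hi, hinv, DihedralGroup.r_mul_r]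
    obtain ⟨i, hi⟩ := hrot m
    have hneg : DihedralGroup.r (1 : ZMod 0) ^ (-m) = (DihedralGroup.r (1 : ZMod 0) ^ m)⁻¹ := by
      rw [zpow_neg]
    rw [hneg, inv_inv, hi]
    have hsr : (DihedralGroup.sr (0 : ZMod 0))⁻¹ = DihedralGroup.sr 0 :=
      inv_eq_of_mul_eq_one_right (DihedralGroup.sr_mul_self 0)
    rw [hsr, DihedralGroup.sr_mul_r, DihedralGroup.sr_mul_sr, DihedralGroup.r_mul_r]
    rw [DihedralGroup.one_def]; congr 1; ring)

lemma notfin_bsa : ¬ IsOfFinOrder (bsa m (-m)) := by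
  intro h
  have h2 : IsOfFinOrder (Λdih m (bsa m (-m))) := (Λdih m).isOfFinOrder h
  have h3 : Λdih m (bsa m (-m)) = DihedralGroup.r 1 := PresentedGroup.toGroup.of _
  rw [h3] at h2
  have h4 : orderOf (DihedralGroup.r (1 : ZMod 0)) = 0 := DihedralGroup.orderOf_r_one
  rw [orderOf_eq_zero_iff] at h4
  exact h4 h2

lemma φsign_lcs_one {x : BS m (-m)} (hx : x ∈ (⊤ : Subgroup (BS m (-m))).lowerCentralSeries 1) :
    φsign m x = 1 := by
  have h1 : x ∈ commutator (BS m (-m)) := by rwa [Subgroup.top_lowerCentralSeries_one] at hx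
  have h2 : commutator (BS m (-m)) ≤ (φsign m).ker := Abelianization.commutator_subset_ker _
  exact h2 h1

lemma commute_lcs {j : ℕ} (hj : 1 ≤ j) {x y : BS m (-m)}
    (hx : x ∈ (⊤ : Subgroup (BS m (-m))).lowerCentralSeries j) (hy : y ∈ Subgroup.zpowers (A m)) :
    Commute x y := by
  have h1 : x ∈ (⊤ : Subgroup (BS m (-m))).lowerCentralSeries 1 := Subgroup.lowerCentralSeries_antitone (S := ⊤) hj hx
  have h2 : x * A m * x⁻¹ = A m := by
    rw [all_conj, φsign_lcs_one m h1]
    norm_num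
  have h3 : Commute x (A m) := by
    have : x * A m = A m * x := by
      calc x * A m = (x * A m * x⁻¹) * x := by group
        _ = A m * x := by rw [h2]
    exact this
  obtain ⟨k, rfl⟩ := Subgroup.mem_zpowers_iff.mp hy
  exact h3.zpow_right k

lemma A_two_pow_mem : ∀ j : ℕ, A m ^ ((2 : ℤ) ^ (j + 1)) ∈ (⊤ : Subgroup (BS m (-m))).lowerCentralSeries (j + 1) := by
  intro j
  induction j with
  | zero =>
      have hc : bst m (-m) * (A m)⁻¹ * (bst m (-m))⁻¹ = A m := by
        have := t_conj_zpow m (-1)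
        simpa using this
      have h : ⁅A m, bst m (-m)⁆ = A m ^ ((2 : ℤ) ^ 1) := by
        rw [commutatorElement_def]
        calc A m * bst m (-m) * (A m)⁻¹ * (bst m (-m))⁻¹
            = A m * (bst m (-m) * (A m)⁻¹ * (bst m (-m))⁻¹) := by group
          _ = A m * A m := by rw [hc]
          _ = A m ^ ((2 : ℤ) ^ 1) := by
              rw [show ((2 : ℤ) ^ 1) = 1 + 1 from rfl, zpow_add, zpow_one]
      rw [← h]
      exact commutator_mem_lcs_succ _ (Subgroup.mem_top _)
  | succ k ih =>
      have hc : bst m (-m) * (A m ^ ((2:ℤ) ^ (k+1)))⁻¹ * (bst m (-m))⁻¹ = A m ^ ((2:ℤ) ^ (k+1)) := by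
        have := t_conj_zpow m (-((2:ℤ) ^ (k+1)))
        rw [zpow_neg] at this
        simpa using this
      have h : ⁅A m ^ ((2:ℤ) ^ (k+1)), bst m (-m)⁆ = A m ^ ((2 : ℤ) ^ (k + 2)) := by
        rw [commutatorElement_def]
        calc A m ^ ((2:ℤ)^(k+1)) * bst m (-m) * (A m ^ ((2:ℤ)^(k+1)))⁻¹ * (bst m (-m))⁻¹
            = A m ^ ((2:ℤ)^(k+1)) * (bst m (-m) * (A m ^ ((2:ℤ)^(k+1)))⁻¹ * (bst m (-m))⁻¹) := by
              group
          _ = A m ^ ((2:ℤ)^(k+1)) * A m ^ ((2:ℤ)^(k+1)) := by rw [hc]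
          _ = A m ^ ((2 : ℤ) ^ (k + 2)) := by
              rw [← zpow_add]
              congr 1
              ring
      rw [← h]
      exact commutator_mem_lcs_succ _ ih

lemma bsa_two_pow_mem {j : ℕ} (hj : 1 ≤ j) :
    bsa m (-m) ^ ((2 : ℤ) ^ j * m) ∈ (⊤ : Subgroup (BS m (-m))).lowerCentralSeries j := by
  obtain ⟨k, rfl⟩ := Nat.exists_eq_add_of_le hj
  have h := A_two_pow_mem m k
  have he : bsa m (-m) ^ ((2 : ℤ) ^ (1 + k) * m) = A m ^ ((2 : ℤ) ^ (k + 1)) := by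
    unfold A
    rw [← zpow_mul]
    congr 1
    ring
  rw [he, Nat.add_comm 1 k]
  exact h

lemma notfin_bsa_zpow {z : ℤ} (hz : z ≠ 0) : ¬ IsOfFinOrder (bsa m (-m) ^ z) := by
  intro h
  obtain ⟨n, hn, h1⟩ := isOfFinOrder_iff_pow_eq_one.mp h
  have h2 : bsa m (-m) ^ (z * (n : ℤ)) = 1 := by
    rw [zpow_mul, zpow_natCast]
    exact h1
  have h3 : z * (n : ℤ) = 0 := by
    have hinj := injective_zpow_iff_not_isOfFinOrder.mpr (notfin_bsa m)
    have : bsa m (-m) ^ (z * (n : ℤ)) = bsa m (-m) ^ (0 : ℤ) := by simpa using h2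
    exact hinj this
  rcases mul_eq_zero.mp h3 with h' | h'
  · exact hz h'
  · omega

end BSAux


namespace FPAux

open BSAux SemidirectProduct

lemma freeGroupCongr_of' {α β : Type*} (e : α ≃ β) (x : α) :
    FreeGroup.freeGroupCongr e (FreeGroup.of x) = FreeGroup.of (e x) := rfl

/-- the shift action of `ZMod M` on the free group on `ZMod M`. -/
def shiftφ (M : ℕ) : Multiplicative (ZMod M) →* MulAut (FreeGroup (ZMod M)) :=
  MonoidHom.mk' (fun i => (FreeGroup.freeGroupCongr (Equiv.addLeft i.toAdd))) (by
    intro a b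
    apply MulEquiv.toMonoidHom_injective
    apply FreeGroup.ext_hom
    intro c
    simp [freeGroupCongr_of', add_assoc])

/-- `Fr ⋊ ZMod M`, the concrete model of the free product `ℤ * ℤ/M`. -/
abbrev W (M : ℕ) : Type := FreeGroup (ZMod M) ⋊[shiftφ M] Multiplicative (ZMod M)

variable (m : ℤ)

lemma m_eq_toNat (hm : 1 < m) : m = ((m.toNat : ℕ) : ℤ) := (Int.toNat_of_nonneg (by omega)).symm

/-- the homomorphism `FP m → W m.toNat`. -/
noncomputable def Φ (hm : 1 < m) : FP m →* W m.toNat :=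
  PresentedGroup.toGroup
    (f := fun i => ![inr (Multiplicative.ofAdd (1 : ZMod m.toNat)),
      inl (FreeGroup.of (0 : ZMod m.toNat))] i) (by
    rintro r hr
    simp only [FPrels, Set.mem_singleton_iff] at hr
    subst hr
    have h1 : (FreeGroup.lift fun i => ![inr (Multiplicative.ofAdd (1 : ZMod m.toNat)),
        inl (FreeGroup.of (0 : ZMod m.toNat))] i) (FreeGroup.of 0) =
        (inr (Multiplicative.ofAdd (1 : ZMod m.toNat)) : W m.toNat) := by simp
    rw [map_zpow, h1, ← map_zpow]
    have h3 : ((m : ℤ) : ZMod m.toNat) = 0 := by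
      rw [ZMod.intCast_zmod_eq_zero_iff_dvd]
      exact ⟨1, by omega⟩
    have h2 : (Multiplicative.ofAdd (1 : ZMod m.toNat)) ^ m = 1 := by
      apply Multiplicative.toAdd.injective
      rw [toAdd_zpow, toAdd_ofAdd, toAdd_one, zsmul_eq_mul, mul_one, h3]
    rw [h2, map_one])

lemma fpa_pow_toNat (hm : 1 < m) : fpa m ^ (m.toNat : ℕ) = 1 := by
  have h : fpa m ^ ((m.toNat : ℕ) : ℤ) = 1 := by
    rw [← m_eq_toNat m hm]
    exact fpa_zpow_m m
  rwa [zpow_natCast] at h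

lemma fpa_pow_congr (hm : 1 < m) {a b : ℕ} (hab : a % m.toNat = b % m.toNat) :
    fpa m ^ a = fpa m ^ b := by
  have key : ∀ c : ℕ, fpa m ^ c = fpa m ^ (c % m.toNat) := fun c => by
    conv_lhs => rw [← Nat.mod_add_div c m.toNat]
    rw [pow_add, pow_mul, fpa_pow_toNat m hm, one_pow, mul_one]
  rw [key a, key b, hab]

/-- the cyclic factor mapping to `FP m`. -/
noncomputable def ρ₂ (hm : 1 < m) : Multiplicative (ZMod m.toNat) →* FP m :=
  MonoidHom.mk' (fun i => fpa m ^ (i.toAdd.val)) (by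
    intro a b
    haveI : NeZero m.toNat := ⟨by omega⟩
    have h1 : (a * b).toAdd.val = (a.toAdd.val + b.toAdd.val) % m.toNat := by
      rw [toAdd_mul]
      exact ZMod.val_add _ _
    rw [← pow_add]
    apply fpa_pow_congr m hm
    rw [h1, Nat.mod_mod_of_dvd]
    exact dvd_refl _)

/-- the free factor mapping to `FP m`. -/
noncomputable def ρ₁ : FreeGroup (ZMod m.toNat) →* FP m :=
  FreeGroup.lift (fun c => fpa m ^ c.val * fpt m * (fpa m ^ c.val)⁻¹)

lemma ρcompat (hm : 1 < m) : ∀ g : Multiplicative (ZMod m.toNat),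
    (ρ₁ m).comp ((shiftφ m.toNat) g).toMonoidHom =
      (MulAut.conj ((ρ₂ m hm) g)).toMonoidHom.comp (ρ₁ m) := by
  intro g
  apply FreeGroup.ext_hom
  intro c
  haveI : NeZero m.toNat := ⟨by omega⟩
  have key : fpa m ^ ((g.toAdd + c).val) = fpa m ^ (g.toAdd.val) * fpa m ^ (c.val) := by
    rw [← pow_add]
    apply fpa_pow_congr m hm
    rw [ZMod.val_add, Nat.mod_mod_of_dvd]
    exact dvd_refl _
  simp only [MonoidHom.comp_apply, MulEquiv.coe_toMonoidHom, shiftφ, MonoidHom.mk'_apply,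
    freeGroupCongr_of', Equiv.coe_addLeft, ρ₁, FreeGroup.lift_apply_of, MulAut.conj_apply,
    ρ₂]
  rw [key]
  group

/-- the homomorphism `W m.toNat → FP m`, inverse to `Φ`. -/
noncomputable def ρ (hm : 1 < m) : W m.toNat →* FP m :=
  SemidirectProduct.lift (ρ₁ m) (ρ₂ m hm) (ρcompat m hm)

lemma ρ_Φ (hm : 1 < m) : ∀ x : FP m, ρ m hm (Φ m hm x) = x := by
  haveI : Fact (1 < m.toNat) := ⟨by omega⟩
  haveI : NeZero m.toNat := ⟨by omega⟩
  have h : (ρ m hm).comp (Φ m hm) = MonoidHom.id (FP m) := by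
    apply PresentedGroup.ext
    intro i
    fin_cases i
    · show ρ m hm (Φ m hm (fpa m)) = fpa m
      have h1 : Φ m hm (fpa m) = inr (Multiplicative.ofAdd (1 : ZMod m.toNat)) :=
        PresentedGroup.toGroup.of _
      rw [h1]
      have h2 : ρ m hm (inr (Multiplicative.ofAdd (1 : ZMod m.toNat))) =
          ρ₂ m hm (Multiplicative.ofAdd (1 : ZMod m.toNat)) := by unfold ρ; exact SemidirectProduct.lift_inr _ _ _ _
      have h3 : ρ₂ m hm (Multiplicative.ofAdd (1 : ZMod m.toNat)) =
          fpa m ^ ((Multiplicative.ofAdd (1 : ZMod m.toNat)).toAdd.val) := rfl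
      rw [h2, h3, toAdd_ofAdd, ZMod.val_one, pow_one]
    · show ρ m hm (Φ m hm (fpt m)) = fpt m
      have h1 : Φ m hm (fpt m) = inl (FreeGroup.of (0 : ZMod m.toNat)) :=
        PresentedGroup.toGroup.of _
      rw [h1]
      have h2 : ρ m hm (inl (FreeGroup.of (0 : ZMod m.toNat))) =
          ρ₁ m (FreeGroup.of (0 : ZMod m.toNat)) := by unfold ρ; exact SemidirectProduct.lift_inl _ _ _ _
      have h3 : ρ₁ m (FreeGroup.of (0 : ZMod m.toNat)) =
          fpa m ^ (0 : ZMod m.toNat).val * fpt m * (fpa m ^ (0 : ZMod m.toNat).val)⁻¹ :=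
        FreeGroup.lift_apply_of
      rw [h2, h3, ZMod.val_zero]
      group
  intro x
  calc ρ m hm (Φ m hm x) = ((ρ m hm).comp (Φ m hm)) x := rfl
    _ = x := by rw [h]; rfl

lemma Φ_inj (hm : 1 < m) : Function.Injective (Φ m hm) :=
  Function.LeftInverse.injective (ρ_Φ m hm)

lemma Φ_right_eq_one (hm : 1 < m) {j : ℕ} (hj : 1 ≤ j) {x : FP m}
    (hx : x ∈ (⊤ : Subgroup (FP m)).lowerCentralSeries j) : (Φ m hm x).right = 1 := by
  have h1 : x ∈ commutator (FP m) := by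
    rw [← Subgroup.top_lowerCentralSeries_one]
    exact Subgroup.lowerCentralSeries_antitone (S := ⊤) hj hx
  have h2 : commutator (FP m) ≤ (rightHom.comp (Φ m hm)).ker :=
    Abelianization.commutator_subset_ker _
  exact h2 h1

/-- key fact: for `j ≥ 1`, `γ_{j+1}` of the free product `ℤ * ℤ/m` is a free group. -/
lemma isFreeGroup_lcs (hm : 1 < m) {j : ℕ} (hj : 1 ≤ j) :
    IsFreeGroup ↥((⊤ : Subgroup (FP m)).lowerCentralSeries j) := by
  let e : ↥((⊤ : Subgroup (FP m)).lowerCentralSeries j) →* FreeGroup (ZMod m.toNat) :=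
    MonoidHom.mk' (fun x => (Φ m hm (x : FP m)).left) (by
      intro a b
      have ha : (Φ m hm (a : FP m)).right = 1 := Φ_right_eq_one m hm hj a.2
      show (Φ m hm ((a : FP m) * (b : FP m))).left = _
      rw [map_mul, mul_left, ha]
      simp)
  have einj : Function.Injective e := by
    rw [injective_iff_map_eq_one]
    intro x hx
    have hr : (Φ m hm (x : FP m)).right = 1 := Φ_right_eq_one m hm hj x.2
    have hl : (Φ m hm (x : FP m)).left = 1 := hx
    have h0 : Φ m hm (x : FP m) = 1 := by
      rw [← inl_left_mul_inr_right (Φ m hm (x : FP m)), hl, hr]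
      simp
    have : (x : FP m) = 1 := Φ_inj m hm (by rw [h0, map_one])
    exact Subtype.ext this
  exact IsFreeGroup.ofMulEquiv (MonoidHom.ofInjective einj).symm

end FPAux

/-- For `m > 1` and `G = BS(m,-m)`, the `i`-th lower central subgroup (for `i > 1`,
i.e. `lowerCentralSeries` index `j = i - 1 ≥ 1`) decomposes as a direct product
`γ_i G ≅ ⟨a^(2^(i-1) m)⟩ × γ_i(ℤ * ℤ/mℤ)`, where `⟨a^(2^(i-1) m)⟩` is infinite cyclic. -/
theorem bs_m_neg_m_lcs_iso (m : ℤ) (hm : 1 < m) :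
    ∀ j : ℕ, 1 ≤ j →
      Nonempty (((⊤ : Subgroup (BS m (-m))).lowerCentralSeries j) ≃*
        (Subgroup.zpowers (bsa m (-m) ^ (2 ^ j * m)) × (⊤ : Subgroup (FP m)).lowerCentralSeries j)) ∧
      ¬ IsOfFinOrder (bsa m (-m) ^ (2 ^ j * m)) := by
  intro j hj
  have hz : (2:ℤ) ^ j * m ≠ 0 := mul_ne_zero (by positivity) (by omega)
  have hnf : ¬ IsOfFinOrder (bsa m (-m) ^ ((2:ℤ) ^ j * m)) := BSAux.notfin_bsa_zpow m hz
  refine ⟨?_, hnf⟩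
  haveI hfree : IsFreeGroup ↥((⊤ : Subgroup (FP m)).lowerCentralSeries j) := FPAux.isFreeGroup_lcs m hm hj
  have hmap : ((⊤ : Subgroup (BS m (-m))).lowerCentralSeries j).map (BSAux.π m) = (⊤ : Subgroup (FP m)).lowerCentralSeries j :=
    lcs_map_eq (BSAux.π m) (BSAux.π_surj m) j
  let q : ↥((⊤ : Subgroup (BS m (-m))).lowerCentralSeries j) →* ↥((⊤ : Subgroup (FP m)).lowerCentralSeries j) :=
    (MulEquiv.subgroupCongr hmap).toMonoidHom.comp ((BSAux.π m).subgroupMap _)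
  have hq : Function.Surjective q :=
    (MulEquiv.subgroupCongr hmap).surjective.comp ((BSAux.π m).subgroupMap_surjective _)
  have hqval : ∀ x : ↥((⊤ : Subgroup (BS m (-m))).lowerCentralSeries j),
      ((q x : FP m)) = BSAux.π m (x : BS m (-m)) := fun x => rfl
  have hqker : ∀ x : ↥((⊤ : Subgroup (BS m (-m))).lowerCentralSeries j),
      (q x = 1 ↔ BSAux.π m (x : BS m (-m)) = 1) := by
    intro x
    constructor
    · intro h
      rw [← hqval x, h]
      rfl
    · intro h
      apply Subtype.ext
      rw [hqval x, h]
      rfl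
  obtain ⟨s, hs⟩ := exists_section q hq
  have hc : ∀ x y : ↥((⊤ : Subgroup (BS m (-m))).lowerCentralSeries j), q x = 1 → x * y = y * x := by
    intro x y hx
    have h1 : BSAux.π m (x : BS m (-m)) = 1 := (hqker x).mp hx
    have h2 : (x : BS m (-m)) ∈ Subgroup.zpowers (BSAux.A m) := by
      rw [← BSAux.ker_π m]
      exact h1
    have h3 : Commute (y : BS m (-m)) (x : BS m (-m)) := BSAux.commute_lcs m hj y.2 h2
    exact Subtype.ext h3.eq.symm
  let eSplit := splitIso q s hs hc
  -- identify the kernel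
  set J : Subgroup (BS m (-m)) :=
    (⊤ : Subgroup (BS m (-m))).lowerCentralSeries j ⊓ Subgroup.zpowers (BSAux.A m) with hJ
  have hker : q.ker = J.subgroupOf ((⊤ : Subgroup (BS m (-m))).lowerCentralSeries j) := by
    ext x
    rw [MonoidHom.mem_ker, Subgroup.mem_subgroupOf, hqker x, hJ, Subgroup.mem_inf]
    constructor
    · intro h
      exact ⟨x.2, by rw [← BSAux.ker_π m]; exact h⟩
    · intro h
      have h2 := h.2
      rw [← BSAux.ker_π m] at h2
      exact h2
  have kerEquiv : q.ker ≃* ↥J :=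
    (MulEquiv.subgroupCongr hker).trans (Subgroup.subgroupOfEquivOfLe inf_le_left)
  -- J is infinite cyclic
  have hA2 : BSAux.A m ^ ((2:ℤ)^j) = bsa m (-m) ^ ((2:ℤ)^j * m) := by
    unfold BSAux.A
    rw [← zpow_mul, mul_comm]
  have hA2j_mem : bsa m (-m) ^ ((2:ℤ)^j * m) ∈ J := by
    rw [hJ, Subgroup.mem_inf]
    exact ⟨BSAux.bsa_two_pow_mem m hj, Subgroup.mem_zpowers_iff.mpr ⟨(2:ℤ)^j, hA2⟩⟩
  haveI hcycA : IsCyclic ↥(Subgroup.zpowers (BSAux.A m)) := by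
    refine ⟨⟨⟨BSAux.A m, Subgroup.mem_zpowers _⟩, ?_⟩⟩
    rintro ⟨x, hx⟩
    obtain ⟨k, hk⟩ := Subgroup.mem_zpowers_iff.mp hx
    refine Subgroup.mem_zpowers_iff.mpr ⟨k, ?_⟩
    apply Subtype.ext
    rw [SubgroupClass.coe_zpow]
    exact hk
  haveI hcycJ : IsCyclic ↥J := by
    have e := Subgroup.subgroupOfEquivOfLe (inf_le_right :
      J ≤ Subgroup.zpowers (BSAux.A m))
    exact isCyclic_of_surjective e e.surjective
  obtain ⟨g, hg⟩ := IsCyclic.exists_generator (α := ↥J)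
  have hgne : (g : BS m (-m)) ≠ 1 := by
    intro hone
    obtain ⟨k, hk⟩ := Subgroup.mem_zpowers_iff.mp (hg ⟨_, hA2j_mem⟩)
    have : bsa m (-m) ^ ((2:ℤ)^j * m) = 1 := by
      have hco := congrArg (Subtype.val) hk
      rw [SubgroupClass.coe_zpow, hone, one_zpow] at hco
      exact hco.symm
    exact hnf (this ▸ IsOfFinOrder.one)
  have hgnf : ¬ IsOfFinOrder (g : BS m (-m)) := by
    have hgzp : (g : BS m (-m)) ∈ Subgroup.zpowers (BSAux.A m) := (Subgroup.mem_inf.mp g.2).2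
    obtain ⟨k, hk⟩ := Subgroup.mem_zpowers_iff.mp hgzp
    have hk0 : k ≠ 0 := by
      intro h0
      rw [h0, zpow_zero] at hk
      exact hgne hk.symm
    have : BSAux.A m ^ k = bsa m (-m) ^ (m * k) := by
      unfold BSAux.A
      rw [← zpow_mul]
    rw [← hk, this]
    exact BSAux.notfin_bsa_zpow m (mul_ne_zero (by omega) hk0)
  have hgnf' : ¬ IsOfFinOrder g := by
    intro h
    exact hgnf (J.subtype.isOfFinOrder h)
  have hgtop : Subgroup.zpowers g = (⊤ : Subgroup ↥J) := by
    rw [Subgroup.eq_top_iff']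
    exact hg
  have ZJ : Multiplicative ℤ ≃* ↥J :=
    (zpowEquivZpowers hgnf').trans ((MulEquiv.subgroupCongr hgtop).trans Subgroup.topEquiv)
  have Zzp : Multiplicative ℤ ≃* ↥(Subgroup.zpowers (bsa m (-m) ^ ((2:ℤ)^j * m))) :=
    zpowEquivZpowers hnf
  have kerToZp : q.ker ≃* ↥(Subgroup.zpowers (bsa m (-m) ^ ((2:ℤ)^j * m))) :=
    kerEquiv.trans (ZJ.symm.trans Zzp)
  exact ⟨eSplit.trans (MulEquiv.prodCongr kerToZp (MulEquiv.refl _))⟩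
end

section
/- A Baumslag-Solitar group BS(m,n) is torsion-free residually nilpotent (i.e., residually (torsion-free nilpotent)) if and only if m = n = 1, that is, if and only if BS(m,n) ≅ ℤ × ℤ. -/
/-- A group is residually (torsion-free nilpotent) if every nontrivial element survives
in some torsion-free nilpotent quotient. -/
def IsResiduallyTorsionFreeNilpotent (G : Type*) [Group G] : Prop :=
  ∀ g : G, g ≠ 1 → ∃ (N : Subgroup G) (_ : N.Normal),
    g ∉ N ∧ Group.IsNilpotent (G ⧸ N) ∧ (∀ x : G ⧸ N, x ≠ 1 → ¬IsOfFinOrder x)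

/-- Torsion-freeness (the old `MonoidIsTorsionFree`). -/
def MonoidIsTorsionFree (G : Type*) [Monoid G] : Prop :=
  ∀ g : G, g ≠ 1 → ¬IsOfFinOrder g


section TFN

variable {G : Type*} [Group G]

/-- Key commutator congruence along the upper central series. -/
lemma comm_pow_mem_ucs (j : ℕ) (x y : G) (hx : x ∈ Subgroup.upperCentralSeries G (j + 2)) :
    ∀ k : ℕ, (x ^ k * y * (x ^ k)⁻¹ * y⁻¹) * ((x * y * x⁻¹ * y⁻¹) ^ k)⁻¹ ∈
      Subgroup.upperCentralSeries G j := by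
  intro k
  induction k with
  | zero => simpa using one_mem _
  | succ k ih =>
    set U := Subgroup.upperCentralSeries G j with hU
    set c := x * y * x⁻¹ * y⁻¹ with hc
    have hcmem : c ∈ Subgroup.upperCentralSeries G (j + 1) :=
      (mem_upperCentralSeries_succ_iff.mp hx) y
    -- d := the defect at stage k
    set d := (x ^ k * y * (x ^ k)⁻¹ * y⁻¹) * (c ^ k)⁻¹ with hd
    have hdm : d ∈ U := ih
    have hw0 : c ^ k * x * (c ^ k)⁻¹ * x⁻¹ ∈ U :=
      (mem_upperCentralSeries_succ_iff.mp (pow_mem hcmem k)) x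
    have hw : x * c ^ k * x⁻¹ * (c ^ k)⁻¹ ∈ U := by
      have := inv_mem hw0
      have he : (c ^ k * x * (c ^ k)⁻¹ * x⁻¹)⁻¹ = x * c ^ k * x⁻¹ * (c ^ k)⁻¹ := by group
      rwa [he] at this
    have hxd : x * d * x⁻¹ ∈ U := (show (Subgroup.upperCentralSeries G j).Normal from inferInstance).conj_mem d hdm x
    have key : (x ^ (k+1) * y * (x ^ (k+1))⁻¹ * y⁻¹) * ((c : G) ^ (k+1))⁻¹
        = (x * d * x⁻¹) * (x * c ^ k * x⁻¹ * (c ^ k)⁻¹) := by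
      have hxk : x ^ (k+1) = x * x ^ k := by rw [pow_succ']
      have hck : c ^ (k+1) = c ^ k * c := by rw [pow_succ]
      rw [hxk, hck, hd, hc]
      group
    rw [key]
    exact mul_mem hxd hw

lemma mem_ucs_of_pow_mem (hTF : MonoidIsTorsionFree G) :
    ∀ (i : ℕ) (k : ℕ) (x : G), 0 < k → x ∈ Subgroup.upperCentralSeries G (i + 1) →
      x ^ k ∈ Subgroup.upperCentralSeries G i → x ∈ Subgroup.upperCentralSeries G i := by
  intro i
  induction i with
  | zero =>
    intro k x hk hx1 hxk
    rw [upperCentralSeries_zero, Subgroup.mem_bot] at hxk ⊢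
    by_contra hne
    exact hTF x hne (isOfFinOrder_iff_pow_eq_one.mpr ⟨k, hk, hxk⟩)
  | succ j ih =>
    intro k x hk hx1 hxk
    rw [mem_upperCentralSeries_succ_iff]
    intro y
    have h1 : (x ^ k * y * (x ^ k)⁻¹ * y⁻¹) ∈ Subgroup.upperCentralSeries G j :=
      (mem_upperCentralSeries_succ_iff.mp hxk) y
    have h2 := comm_pow_mem_ucs j x y hx1 k
    have h3 : ((x * y * x⁻¹ * y⁻¹) ^ k)⁻¹ ∈ Subgroup.upperCentralSeries G j := by
      have he : ((x * y * x⁻¹ * y⁻¹) ^ k)⁻¹ = (x ^ k * y * (x ^ k)⁻¹ * y⁻¹)⁻¹ *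
          ((x ^ k * y * (x ^ k)⁻¹ * y⁻¹) * ((x * y * x⁻¹ * y⁻¹) ^ k)⁻¹) := by group
      rw [he]
      exact mul_mem (inv_mem h1) h2
    have hc1 : (x * y * x⁻¹ * y⁻¹) ∈ Subgroup.upperCentralSeries G (j + 1) :=
      (mem_upperCentralSeries_succ_iff.mp hx1) y
    exact ih k _ hk hc1 (by simpa [commutatorElement_def] using inv_mem h3)

lemma pow_mem_center_imp (hTF : MonoidIsTorsionFree G) [Group.IsNilpotent G]
    {x : G} {k : ℕ} (hk : 0 < k) (h : x ^ k ∈ Subgroup.center G) :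
    x ∈ Subgroup.center G := by
  obtain ⟨c, hc⟩ := Group.IsNilpotent.nilpotent (G := G)
  have hxk : x ^ k ∈ Subgroup.upperCentralSeries G 1 := by rwa [upperCentralSeries_one]
  rw [← upperCentralSeries_one]
  have key : ∀ j : ℕ, x ∈ Subgroup.upperCentralSeries G (1 + j) → x ∈ Subgroup.upperCentralSeries G 1 := by
    intro j
    induction j with
    | zero => exact fun h => h
    | succ j ih =>
      intro hx
      refine ih (mem_ucs_of_pow_mem hTF (1 + j) k x hk (by rwa [← Nat.add_assoc] at hx) ?_)
      exact upperCentralSeries_mono G (Nat.le_add_right 1 j) hxk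
  refine key c ?_
  have h2 : Subgroup.upperCentralSeries G (1 + c) = ⊤ :=
    eq_top_iff.mpr (hc ▸ upperCentralSeries_mono G (Nat.le_add_left c 1))
  rw [h2]
  exact Subgroup.mem_top x

lemma subgroup_torsionFree (hTF : MonoidIsTorsionFree G) (H : Subgroup G) :
    MonoidIsTorsionFree H := by
  intro g hg hfin
  refine hTF (g : G) (by simpa using hg) ?_
  exact H.subtype.isOfFinOrder hfin

lemma tfn_eq_of_pow_eq [Group.IsNilpotent G] (hTF : MonoidIsTorsionFree G)
    {x y : G} {k : ℕ} (hk : 0 < k) (h : x ^ k = y ^ k) : x = y := by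
  set H := Subgroup.closure ({x, y} : Set G) with hH
  have hx : x ∈ H := Subgroup.subset_closure (by simp)
  have hy : y ∈ H := Subgroup.subset_closure (by simp)
  set X : H := ⟨x, hx⟩
  set Y : H := ⟨y, hy⟩
  have hXY : X ^ k = Y ^ k := by ext; push_cast; exact h
  have hcomm' : ∀ g ∈ H, Commute (x ^ k) g := by
    intro g hg
    induction hg using Subgroup.closure_induction with
    | mem z hz =>
      rcases hz with rfl | hz
      · exact (Commute.refl z).pow_left k
      · rcases hz with rfl
        rw [h]
        exact (Commute.refl z).pow_left k
    | one => exact Commute.one_right _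
    | mul a b _ _ ha hb => exact ha.mul_right hb
    | inv a _ ha => exact ha.inv_right
  have hcen : X ^ k ∈ Subgroup.center H := by
    rw [Subgroup.mem_center_iff]
    intro g
    ext
    push_cast
    exact (hcomm' (g : G) g.2).symm.eq
  have hXcen : X ∈ Subgroup.center H :=
    pow_mem_center_imp (subgroup_torsionFree hTF H) hk hcen
  have hcomm : Commute X Y := ((Subgroup.mem_center_iff.mp hXcen Y).symm : X * Y = Y * X)
  have h1 : (X * Y⁻¹) ^ k = 1 := by
    rw [hcomm.inv_right.mul_pow, inv_pow, hXY, mul_inv_cancel]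
  have h2 : X * Y⁻¹ = 1 := by
    by_contra hne
    exact subgroup_torsionFree hTF H _ hne (isOfFinOrder_iff_pow_eq_one.mpr ⟨k, hk, h1⟩)
  have : X = Y := by rw [← mul_inv_cancel Y] at h2; exact mul_right_cancel h2
  simpa [X, Y, Subtype.ext_iff] using this

lemma tfn_commute_of_pow_commute [Group.IsNilpotent G] (hTF : MonoidIsTorsionFree G)
    {x y : G} {k : ℕ} (hk : 0 < k) (h : Commute (x ^ k) y) : Commute x y := by
  have h1 : (y⁻¹ * x * y) ^ k = x ^ k := by
    have e1 : (y⁻¹ * x * y) ^ k = y⁻¹ * x ^ k * y := by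
      have := conj_pow (i := k) (a := y⁻¹) (b := x)
      simpa using this
    rw [e1, show y⁻¹ * x ^ k * y = y⁻¹ * (x ^ k * y) by group, h.eq]
    group
  have h2 := tfn_eq_of_pow_eq hTF hk h1
  have h3 : x * y = y * x := by
    have := congrArg (fun z => y * z) h2
    simp only [← mul_assoc, mul_inv_cancel, one_mul] at this
    exact this
  exact h3

lemma quotient_center_torsionFree [Group.IsNilpotent G] (hTF : MonoidIsTorsionFree G) :
    MonoidIsTorsionFree (G ⧸ Subgroup.center G) := by
  intro q hq hfin
  obtain ⟨k, hk, hpow⟩ := isOfFinOrder_iff_pow_eq_one.mp hfin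
  obtain ⟨g, rfl⟩ := QuotientGroup.mk_surjective q
  rw [← QuotientGroup.mk_pow, QuotientGroup.eq_one_iff] at hpow
  exact hq (QuotientGroup.eq_one_iff _ |>.mpr (pow_mem_center_imp hTF hk hpow))

lemma eq_one_of_zpow_eq_one {x : G} {d : ℤ} (hd : d ≠ 0) (hTF : MonoidIsTorsionFree G)
    (h : x ^ d = 1) : x = 1 := by
  by_contra hne
  refine hTF x hne (isOfFinOrder_iff_pow_eq_one.mpr ⟨d.natAbs, by omega, ?_⟩)
  rcases Int.natAbs_eq d with he | he
  · rw [← zpow_natCast, ← he, h]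
  · rw [← zpow_natCast, show ((d.natAbs : ℤ)) = -d by omega, zpow_neg, h, inv_one]

lemma tfn_aux (c : ℕ) : ∀ (G : Type*) [Group G] [Group.IsNilpotent G],
    MonoidIsTorsionFree G → Group.nilpotencyClass G ≤ c →
    ∀ (x t : G) (m n : ℤ), m ≠ n → t⁻¹ * x ^ m * t = x ^ n → x = 1 := by
  induction c with
  | zero =>
    intro G _ _ _ hc x t m n _ _
    have : Subsingleton G := nilpotencyClass_zero_iff_subsingleton.mp (Nat.le_zero.mp hc)
    exact Subsingleton.elim _ _
  | succ c ih =>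
    intro G _ _ hTF hc x t m n hmn hrel
    set Q := G ⧸ Subgroup.center G
    have hQc : Group.nilpotencyClass Q ≤ c := by
      rw [nilpotencyClass_quotient_center]
      omega
    have hQTF : MonoidIsTorsionFree Q := quotient_center_torsionFree hTF
    have hxQ : (QuotientGroup.mk x : Q) = 1 := by
      refine ih Q hQTF hQc _ (QuotientGroup.mk t) m n hmn ?_
      have := congrArg (QuotientGroup.mk (s := Subgroup.center G)) hrel
      simpa using this
    have hxc : x ∈ Subgroup.center G := (QuotientGroup.eq_one_iff _).mp hxQ
    have hxm : x ^ m ∈ Subgroup.center G := Subgroup.zpow_mem _ hxc m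
    have h2 : x ^ m = x ^ n := by
      rw [← hrel, Subgroup.mem_center_iff.mp hxm t⁻¹]
      group
    have h3 : x ^ (m - n) = 1 := by
      rw [zpow_sub, h2, mul_inv_cancel]
    exact eq_one_of_zpow_eq_one (by omega) hTF h3

lemma tfn_eq_one_of_conj_zpow [Group.IsNilpotent G] (hTF : MonoidIsTorsionFree G)
    {x t : G} {m n : ℤ} (hmn : m ≠ n) (h : t⁻¹ * x ^ m * t = x ^ n) : x = 1 :=
  tfn_aux (Group.nilpotencyClass G) G hTF le_rfl x t m n hmn h

end TFN


section Glue
variable {G H : Type*} [Group G] [Group H]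

lemma tf_of_injective (f : G →* H) (hf : Function.Injective f)
    (hTF : MonoidIsTorsionFree H) : MonoidIsTorsionFree G := by
  intro g hg hfin
  refine hTF (f g) (fun h => hg (by rwa [← map_one f, hf.eq_iff] at h)) ?_
  exact f.isOfFinOrder hfin

lemma nilpotent_of_iso (e : G ≃* H) [Group.IsNilpotent H] : Group.IsNilpotent G :=
  nilpotent_of_surjective e.symm.toMonoidHom e.symm.surjective

lemma zz_torsionFree : MonoidIsTorsionFree (Multiplicative (ℤ × ℤ)) := by
  intro g hg hfin
  obtain ⟨k, hk, hpow⟩ := isOfFinOrder_iff_pow_eq_one.mp hfin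
  apply hg
  have h1 : k • g.toAdd = (0 : ℤ × ℤ) := by
    have := congrArg Multiplicative.toAdd hpow
    simpa [toAdd_pow] using this
  have h2 : g.toAdd = (0 : ℤ × ℤ) := by
    have hf := congrArg Prod.fst h1
    have hs := congrArg Prod.snd h1
    simp only [Prod.smul_fst, Prod.smul_snd, nsmul_eq_mul, Prod.fst_zero, Prod.snd_zero] at hf hs
    have hk' : ((k : ℤ)) ≠ 0 := by exact_mod_cast hk.ne'
    have e1 := (mul_eq_zero.mp hf).resolve_left hk'
    have e2 := (mul_eq_zero.mp hs).resolve_left hk'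
    exact Prod.ext e1 e2
  have : g = Multiplicative.ofAdd 0 := by
    rw [← h2]; rfl
  simpa using this
end Glue

section BSBasic
variable {m n : ℤ}

lemma bs_rel (m n : ℤ) :
    (bst m n)⁻¹ * (bsa m n) ^ m * bst m n * ((bsa m n) ^ n)⁻¹ = 1 := by
  have hmem : ((FreeGroup.of 1)⁻¹ * (FreeGroup.of 0) ^ m * (FreeGroup.of 1) *
      ((FreeGroup.of 0) ^ n)⁻¹ : FreeGroup (Fin 2)) ∈ Subgroup.normalClosure (BSrels m n) :=
    Subgroup.subset_normalClosure rfl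
  have h1 : (PresentedGroup.mk (BSrels m n)) ((FreeGroup.of 1)⁻¹ * (FreeGroup.of 0) ^ m *
      (FreeGroup.of 1) * ((FreeGroup.of 0) ^ n)⁻¹) = 1 :=
    (QuotientGroup.eq_one_iff _).mpr hmem
  simpa [bsa, bst, PresentedGroup.of, map_mul, map_inv, map_zpow] using h1

lemma bs_rel' (m n : ℤ) :
    (bst m n)⁻¹ * (bsa m n) ^ m * bst m n = (bsa m n) ^ n := by
  have h := bs_rel m n
  have := congrArg (fun z => z * (bsa m n) ^ n) h
  simpa [mul_assoc] using this

/-- Build a hom out of `BS m n` from images of the generators satisfying the relation. -/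
def bsLift {G : Type*} [Group G] (A T : G) (h : T⁻¹ * A ^ m * T = A ^ n) :
    BS m n →* G :=
  PresentedGroup.toGroup (f := ![A, T]) (by
    rintro r hr
    rcases hr with rfl
    simp only [map_mul, map_inv, map_zpow, FreeGroup.lift_apply_of]
    rw [show ((![A, T] : Fin 2 → G) 0) = A from rfl, show ((![A, T] : Fin 2 → G) 1) = T from rfl]
    rw [show (T⁻¹ * A ^ m * T * (A ^ n)⁻¹ : G) = (T⁻¹ * A ^ m * T) * (A ^ n)⁻¹ from rfl, h]
    group)

@[simp] lemma bsLift_a {G : Type*} [Group G] (A T : G) (h : T⁻¹ * A ^ m * T = A ^ n) :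
    bsLift A T h (bsa m n) = A := by
  simpa [bsa, bsLift] using PresentedGroup.toGroup.of _

@[simp] lemma bsLift_t {G : Type*} [Group G] (A T : G) (h : T⁻¹ * A ^ m * T = A ^ n) :
    bsLift A T h (bst m n) = T := by
  simpa [bst, bsLift] using PresentedGroup.toGroup.of _

end BSBasic

section Affine
variable {m n : ℤ}

lemma bsa_ne_one (hm : m ≠ 0) (hn : n ≠ 0) : bsa m n ≠ 1 := by
  have hq : ((m : ℚ) / (n : ℚ)) ≠ 0 := by
    apply div_ne_zero <;> exact_mod_cast ‹_›
  set A : Equiv.Perm ℚ := Equiv.addLeft (1 : ℚ) with hA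
  set T : Equiv.Perm ℚ := Equiv.mulLeft₀ ((m : ℚ) / (n : ℚ)) hq with hT
  have hrel : T⁻¹ * A ^ m * T = A ^ n := by
    have h1 : A ^ m * T = T * A ^ n := by
      ext x
      simp only [hA, hT, Equiv.Perm.mul_apply, Equiv.zsmul_addLeft]
      simp only [Equiv.coe_addLeft, Equiv.mulLeft₀_apply]
      have : (m : ℚ) • (1 : ℚ) = (m : ℚ) := by simp
      push_cast
      field_simp
      ring
    rw [mul_assoc, h1, ← mul_assoc, inv_mul_cancel, one_mul]
  intro hone
  have := congrArg (bsLift A T hrel) hone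
  rw [bsLift_a, map_one] at this
  have h0 : A 0 = 0 := by rw [this]; rfl
  simp [hA] at h0
end Affine

section Heis

/-- The Heisenberg group over a commutative ring. -/
@[ext]
structure Heis (R : Type*) where
  x : R
  y : R
  z : R

namespace Heis
variable {R : Type*} [CommRing R]

instance : Mul (Heis R) := ⟨fun a b => ⟨a.x + b.x, a.y + b.y, a.z + b.z + a.x * b.y⟩⟩
instance : One (Heis R) := ⟨⟨0, 0, 0⟩⟩
instance : Inv (Heis R) := ⟨fun a => ⟨-a.x, -a.y, a.x * a.y - a.z⟩⟩

@[simp] lemma mul_def (a b : Heis R) :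
    a * b = ⟨a.x + b.x, a.y + b.y, a.z + b.z + a.x * b.y⟩ := rfl
@[simp] lemma one_def : (1 : Heis R) = ⟨0, 0, 0⟩ := rfl
@[simp] lemma inv_def (a : Heis R) : a⁻¹ = ⟨-a.x, -a.y, a.x * a.y - a.z⟩ := rfl

instance : Group (Heis R) where
  mul_assoc a b c := by ext <;> simp <;> ring
  one_mul a := by ext <;> simp
  mul_one a := by ext <;> simp
  inv_mul_cancel a := by ext <;> simp

lemma A_pow (k : ℕ) : (⟨1, 0, 0⟩ : Heis R) ^ k = ⟨(k : R), 0, 0⟩ := by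
  induction k with
  | zero => simp
  | succ k ih => rw [pow_succ, ih]; ext <;> simp <;> push_cast <;> ring

end Heis

variable {m n : ℤ}

lemma bs_comm_ne_one (hm : 1 < m) :
    bsa m m * bst m m * (bsa m m)⁻¹ * (bst m m)⁻¹ ≠ 1 := by
  haveI : Fact (1 < m.toNat) := ⟨by omega⟩
  set R := ZMod m.toNat
  set A : Heis R := ⟨1, 0, 0⟩ with hA
  set T : Heis R := ⟨0, 1, 0⟩ with hT
  have hApow : A ^ (m : ℤ) = 1 := by
    have h1 : A ^ (m : ℤ) = A ^ (m.toNat : ℕ) := by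
      rw [← zpow_natCast]
      congr 1
      omega
    rw [h1, Heis.A_pow, ZMod.natCast_self]
    rfl
  have hrel : T⁻¹ * A ^ (m : ℤ) * T = A ^ (m : ℤ) := by rw [hApow, mul_one, inv_mul_cancel]
  intro hone
  have := congrArg (bsLift A T hrel) hone
  simp only [map_mul, map_inv, map_one, bsLift_a, bsLift_t] at this
  have : A * T * A⁻¹ * T⁻¹ = 1 := this
  rw [hA, hT] at this
  have hz := congrArg Heis.z this
  simp at hz

end Heis

section Iso11

lemma bs11_comm : Commute (bsa 1 1) (bst 1 1) := by
  have h := bs_rel' 1 1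
  simp only [zpow_one] at h
  have := congrArg (fun z => bst 1 1 * z) h
  simp only [← mul_assoc, mul_inv_cancel, one_mul] at this
  exact this

lemma comm_conj {M : Type*} [CommGroup M] (a b : M) (k : ℤ) :
    b⁻¹ * a ^ k * b = a ^ k := by
  rw [mul_comm b⁻¹ (a ^ k), mul_assoc, inv_mul_cancel, mul_one]

/-- The hom `BS 1 1 → Multiplicative (ℤ × ℤ)`. -/
def bs11toZZ : BS 1 1 →* Multiplicative (ℤ × ℤ) :=
  bsLift (Multiplicative.ofAdd ((1 : ℤ), (0 : ℤ))) (Multiplicative.ofAdd ((0 : ℤ), (1 : ℤ)))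
    (comm_conj _ _ 1)

def zztoBS11 : Multiplicative (ℤ × ℤ) →* BS 1 1 :=
  ((zpowersHom _ (bsa 1 1)).noncommCoprod (zpowersHom _ (bst 1 1))
      (fun a b => by
        simp only [zpowersHom_apply]
        exact (bs11_comm.zpow_zpow a.toAdd b.toAdd))).comp
    (MulEquiv.prodMultiplicative (G := ℤ) (H := ℤ)).toMonoidHom

lemma zztoBS11_apply (p q : ℤ) :
    zztoBS11 (Multiplicative.ofAdd (p, q)) = (bsa 1 1) ^ p * (bst 1 1) ^ q := by
  simp [zztoBS11, MonoidHom.noncommCoprod_apply, zpowersHom_apply]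

lemma bs11_left : zztoBS11.comp bs11toZZ = MonoidHom.id (BS 1 1) := by
  apply PresentedGroup.ext
  intro i
  fin_cases i
  · show zztoBS11 (bs11toZZ (bsa 1 1)) = bsa 1 1
    rw [bs11toZZ, bsLift_a, zztoBS11_apply]
    simp
  · show zztoBS11 (bs11toZZ (bst 1 1)) = bst 1 1
    rw [bs11toZZ, bsLift_t, zztoBS11_apply]
    simp

lemma bs11_right : bs11toZZ.comp zztoBS11 = MonoidHom.id (Multiplicative (ℤ × ℤ)) := by
  refine MonoidHom.ext fun x => ?_
  obtain ⟨p, q⟩ := x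
  show bs11toZZ (zztoBS11 (Multiplicative.ofAdd (p, q))) = Multiplicative.ofAdd (p, q)
  rw [zztoBS11_apply, map_mul, map_zpow, map_zpow, bs11toZZ, bsLift_a, bsLift_t]
  rw [← ofAdd_zsmul, ← ofAdd_zsmul, ← ofAdd_add]
  congr 1
  simp [Prod.ext_iff]

/-- `BS(1,1)` is isomorphic to `ℤ × ℤ`. -/
def bs11equiv : BS 1 1 ≃* Multiplicative (ℤ × ℤ) :=
  MonoidHom.toMulEquiv bs11toZZ zztoBS11 bs11_left bs11_right

end Iso11


section RTFN
variable {G H : Type*} [Group G] [Group H]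

lemma rtfn_of_tfn [Group.IsNilpotent G] (hTF : MonoidIsTorsionFree G) :
    IsResiduallyTorsionFreeNilpotent G := by
  intro g hg
  refine ⟨⊥, inferInstance, by simpa [Subgroup.mem_bot] using hg, inferInstance, ?_⟩
  exact tf_of_injective (QuotientGroup.quotientBot (G := G)).toMonoidHom
    (MulEquiv.injective _) hTF

lemma rtfn_of_iso (e : G ≃* H) (h : IsResiduallyTorsionFreeNilpotent H) :
    IsResiduallyTorsionFreeNilpotent G := by
  intro g hg
  have hge : e g ≠ 1 := fun hh => hg (by rwa [← map_one e, e.injective.eq_iff] at hh)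
  obtain ⟨N', hN', hgN', hnil, htf⟩ := h (e g) hge
  haveI := hN'
  haveI := hnil
  haveI : (N'.comap e.toMonoidHom).Normal := Subgroup.Normal.comap hN' _
  have hmap : (N'.comap e.toMonoidHom).map e.toMonoidHom = N' :=
    Subgroup.map_comap_eq_self_of_surjective e.surjective _
  let e' : (G ⧸ N'.comap e.toMonoidHom) ≃* (H ⧸ N') := QuotientGroup.congr _ _ e hmap
  exact ⟨N'.comap e.toMonoidHom, inferInstance, by simpa [Subgroup.mem_comap] using hgN',
    nilpotent_of_iso e', tf_of_injective e'.toMonoidHom e'.injective htf⟩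

end RTFN

/-- A Baumslag-Solitar group `BS(m,n)` with `0 < m ≤ |n|` is residually
(torsion-free nilpotent) if and only if `m = n = 1`, that is, if and only if
`BS(m,n) ≅ ℤ × ℤ`. -/
theorem bs_residually_torsion_free_nilpotent_iff (m n : ℤ) (hm : 0 < m) (hmn : m ≤ |n|) :
    (IsResiduallyTorsionFreeNilpotent (BS m n) ↔ (m = 1 ∧ n = 1)) ∧
    (IsResiduallyTorsionFreeNilpotent (BS m n) ↔
      Nonempty (BS m n ≃* Multiplicative (ℤ × ℤ))) := by
  have hn0 : n ≠ 0 := by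
    intro h
    rw [h] at hmn
    simp at hmn
    omega
  have fwd : IsResiduallyTorsionFreeNilpotent (BS m n) → m = 1 ∧ n = 1 := by
    intro hR
    have hmn_eq : m = n := by
      by_contra hne
      obtain ⟨N, hNrm, hgN, hnil, htf⟩ := hR (bsa m n) (bsa_ne_one (by omega) hn0)
      haveI := hNrm
      haveI := hnil
      set π := QuotientGroup.mk' N with hπ
      have hrel : (π (bst m n))⁻¹ * (π (bsa m n)) ^ m * π (bst m n) = (π (bsa m n)) ^ n := by
        have := congrArg π (bs_rel' m n)
        simpa [map_mul, map_inv, map_zpow] using this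
      have h1 := tfn_eq_one_of_conj_zpow htf hne hrel
      exact hgN ((QuotientGroup.eq_one_iff _).mp h1)
    subst hmn_eq
    have hm1 : m = 1 := by
      by_contra hne1
      have hm2 : 1 < m := by omega
      obtain ⟨N, hNrm, hgN, hnil, htf⟩ := hR _ (bs_comm_ne_one hm2)
      haveI := hNrm
      haveI := hnil
      set π := QuotientGroup.mk' N with hπ
      set x := π (bsa m m) with hx
      set t := π (bst m m) with ht
      have hrel : t⁻¹ * x ^ m * t = x ^ m := by
        have := congrArg π (bs_rel' m m)
        simpa [map_mul, map_inv, map_zpow, hx, ht] using this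
      have hzn : x ^ (m : ℤ) = x ^ (m.toNat : ℕ) := by
        rw [← zpow_natCast]
        congr 1
        omega
      have hcp : Commute (x ^ (m.toNat : ℕ)) t := by
        rw [← hzn]
        have := congrArg (fun z => t * z) hrel
        simp only [← mul_assoc, mul_inv_cancel, one_mul] at this
        exact this
      have hcomm : Commute x t := tfn_commute_of_pow_commute htf (by omega) hcp
      have hg1 : π (bsa m m * bst m m * (bsa m m)⁻¹ * (bst m m)⁻¹) = 1 := by
        simp only [map_mul, map_inv, ← hx, ← ht]
        exact commutatorElement_eq_one_iff_commute.mpr hcomm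
      exact hgN ((QuotientGroup.eq_one_iff _).mp hg1)
    exact ⟨hm1, hm1⟩
  have back2 : m = 1 ∧ n = 1 → Nonempty (BS m n ≃* Multiplicative (ℤ × ℤ)) := by
    rintro ⟨rfl, rfl⟩
    exact ⟨bs11equiv⟩
  have back1 : Nonempty (BS m n ≃* Multiplicative (ℤ × ℤ)) →
      IsResiduallyTorsionFreeNilpotent (BS m n) := by
    rintro ⟨e⟩
    exact rtfn_of_iso e (rtfn_of_tfn zz_torsionFree)
  exact ⟨⟨fwd, fun h => back1 (back2 h)⟩, ⟨fun h => back2 (fwd h), back1⟩⟩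
end

section
/- If d = gcd(m,n) ≥ 2, then the Baumslag-Solitar group BS(m,n) contains a free non-abelian subgroup of infinite (countable) rank. -/
open HNNExtension HNNExtension.NormalWord

namespace BSAux

noncomputable section

variable (d : ℕ)

abbrev G0 := Multiplicative (ZMod d)
abbrev φ0 : (⊥ : Subgroup (G0 d)) ≃* (⊥ : Subgroup (G0 d)) := MulEquiv.refl _
abbrev H := HNNExtension (G0 d) ⊥ ⊥ (φ0 d)
def xg : G0 d := Multiplicative.ofAdd 1
def xh : H d := HNNExtension.of (xg d)
def tt : H d := HNNExtension.t
def sgn (b : Bool) : ℤˣ := if b then 1 else -1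
def gen (i : ℕ) : H d := tt d ^ (i : ℤ) * xh d * tt d * (xh d)⁻¹ * tt d ^ (-(i : ℤ))
def ψ : FreeGroup ℕ →* H d := FreeGroup.lift (gen d)

lemma xg_ne_one (hd : 2 ≤ d) : xg d ≠ 1 := by
  haveI : Fact (1 < d) := ⟨hd⟩
  simp only [xg, ne_eq]
  intro h
  have : (1 : ZMod d) = 0 := h
  exact one_ne_zero this

lemma mem_bot_iff (u : ℤˣ) (g : G0 d) :
    g ∈ toSubgroup (⊥ : Subgroup (G0 d)) ⊥ u ↔ g = 1 := by
  rcases Int.units_eq_one_or u with rfl | rfl <;> exact Subgroup.mem_bot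

lemma psi_single (i : ℕ) (b : Bool) :
    ψ d (FreeGroup.mk [(i, b)]) =
      tt d ^ (i : ℤ) * xh d * tt d ^ ((sgn b : ℤˣ) : ℤ) * (xh d)⁻¹ * tt d ^ (-(i : ℤ)) := by
  cases b <;>
    simp [ψ, FreeGroup.lift_mk, gen, sgn, mul_inv_rev, mul_assoc]

/-- the letter-product map used in `ReducedWord.prod` -/
def lp (p : ℤˣ × G0 d) : H d := tt d ^ ((p.1 : ℤˣ) : ℤ) * HNNExtension.of p.2

lemma of_xg : HNNExtension.of (xg d) = xh d := rfl

lemma prod_eq (W : ReducedWord (G0 d) ⊥ ⊥) :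
    W.prod (φ0 d) = HNNExtension.of W.head * (W.toList.map (lp d)).prod := rfl

lemma prod_replicate_neg (i : ℕ) :
    ((List.replicate i (((-1 : ℤˣ), (1 : G0 d)))).map (lp d)).prod = tt d ^ (-(i : ℤ)) := by
  simp [lp, zpow_neg, inv_pow, List.prod_replicate]

/-- The key induction: the image of a reduced word starting with `(i,b)` can be written
as `t^i * x * W.prod` with `W` a reduced HNN word starting with sign `sgn b`. -/
theorem key (hd : 2 ≤ d) : ∀ (L : List (ℕ × Bool)) (i : ℕ) (b : Bool),
    FreeGroup.reduce ((i, b) :: L) = (i, b) :: L →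
    ∃ W : ReducedWord (G0 d) ⊥ ⊥, W.head = 1 ∧
      W.toList.head?.map Prod.fst = some (sgn b) ∧
      ψ d (FreeGroup.mk ((i, b) :: L)) = tt d ^ (i : ℤ) * xh d * W.prod (φ0 d) := by
  intro L
  induction L with
  | nil =>
    intro i b _
    refine ⟨⟨1, (sgn b, (xg d)⁻¹) :: List.replicate i ((-1 : ℤˣ), (1 : G0 d)), ?_⟩, rfl, by simp, ?_⟩
    · refine List.isChain_cons.2 ⟨?_, List.isChain_replicate_of_rel _ (fun _ => rfl)⟩
      intro p _ hmem
      exact absurd (inv_eq_one.1 ((mem_bot_iff d _ _).1 hmem)) (xg_ne_one d hd)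
    · rw [psi_single d i b, prod_eq]
      simp only [List.map_cons, List.prod_cons, prod_replicate_neg, map_one, one_mul, lp]
      simp [mul_assoc, map_inv, xh]
  | cons p L' ih =>
    obtain ⟨j, c⟩ := p
    intro i b hred
    -- extract reducedness of the tail and the non-cancellation condition
    rw [FreeGroup.reduce.cons] at hred
    rcases h' : FreeGroup.reduce ((j, c) :: L') with _ | ⟨hd2, tl2⟩
    · rw [h'] at hred
      change [(i,b)] = (i, b) :: (j, c) :: L' at hred
      simp at hred
    · rw [h'] at hred
      change (if (i, b).1 = hd2.1 ∧ (i, b).2 = !hd2.2 then tl2 else (i,b)::hd2::tl2) = (i, b) :: (j, c) :: L' at hred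
      by_cases hcond : (i, b).1 = hd2.1 ∧ (i, b).2 = !hd2.2
      · rw [if_pos hcond] at hred
        have hlen := FreeGroup.Red.length_le (FreeGroup.reduce.red (L := (j, c) :: L'))
        rw [h'] at hlen
        have := congrArg List.length hred
        simp at this hlen
        omega
      · rw [if_neg hcond] at hred
        obtain ⟨rfl, htl⟩ : hd2 = (j, c) ∧ tl2 = L' := by
          have h1 := hred.symm
          simp only [List.cons.injEq] at h1
          exact ⟨h1.2.1.symm, h1.2.2.symm⟩
        rw [htl] at h'
        obtain ⟨W', hW1, hW2, hW3⟩ := ih j c h'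
        have hsplit : ψ d (FreeGroup.mk ((i, b) :: (j, c) :: L')) =
            ψ d (FreeGroup.mk [(i, b)]) * ψ d (FreeGroup.mk ((j, c) :: L')) := by
          rw [← map_mul, FreeGroup.mul_mk]
          rfl
        have hW'prod : (W'.toList.map (lp d)).prod = W'.prod (φ0 d) := by
          rw [prod_eq, hW1, map_one, one_mul]
        by_cases hij : i = j
        · -- same index: the letters must have the same sign
          subst hij
          have hbc : b = c := by
            have hne : ¬ (b = !c) := fun h => hcond ⟨rfl, h⟩
            cases b <;> cases c <;> simp_all
          subst hbc
          obtain ⟨q, hq1, hq2⟩ : ∃ q, W'.toList.head? = some q ∧ q.1 = sgn b := by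
            rcases h : W'.toList.head? with _ | q
            · rw [h] at hW2; simp at hW2
            · rw [h] at hW2; exact ⟨q, rfl, by simpa using hW2⟩
          refine ⟨⟨1, (sgn b, 1) :: W'.toList, ?_⟩, rfl, by simp, ?_⟩
          · refine List.isChain_cons.2 ⟨?_, W'.chain⟩
            intro p hp _
            rw [hq1] at hp
            cases hp
            exact hq2.symm
          · simp only [hsplit, psi_single, hW3, prod_eq, hW1, List.map_cons, List.prod_cons,
              map_one, one_mul, mul_one, lp, of_xg, zpow_neg, mul_assoc, inv_mul_cancel_left]
        · -- distinct indices
          set k : ℤ := (j : ℤ) - (i : ℤ) with hk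
          have hkne : k ≠ 0 := by
            simp only [hk, sub_ne_zero]
            exact fun h => hij (by exact_mod_cast h.symm)
          set N : ℕ := k.natAbs with hN
          have hN1 : 1 ≤ N := by
            have := Int.natAbs_pos.2 hkne
            omega
          set σ : ℤˣ := if 0 < k then 1 else -1 with hσ
          have hσN : (σ : ℤ) * (N : ℤ) = k := by
            rw [hσ]
            split_ifs with h
            · simp [hN, Int.natAbs_of_nonneg h.le]
            · push_neg at h
              have : (N : ℤ) = -k := by
                rw [hN, Int.ofNat_natAbs_of_nonpos h]
              simp [this]
          refine ⟨⟨1, (sgn b, (xg d)⁻¹) ::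
              (List.replicate (N - 1) (σ, (1 : G0 d)) ++ (σ, xg d) :: W'.toList), ?_⟩,
            rfl, by simp, ?_⟩
          · refine List.isChain_cons.2 ⟨?_, ?_⟩
            · intro p _ hmem
              exact absurd (inv_eq_one.1 ((mem_bot_iff d _ _).1 hmem)) (xg_ne_one d hd)
            · refine List.isChain_append.2 ⟨List.isChain_replicate_of_rel _ (fun _ => rfl), ?_, ?_⟩
              · refine List.isChain_cons.2 ⟨?_, W'.chain⟩
                intro p _ hmem
                exact absurd ((mem_bot_iff d _ _).1 hmem) (xg_ne_one d hd)
              · intro y hy z hz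
                have : y = (σ, (1 : G0 d)) := List.eq_of_mem_replicate (List.mem_of_mem_getLast? hy)
                subst this
                intro _
                simp only [List.head?_cons, Option.mem_def, Option.some.injEq] at hz
                rw [← hz]
          · have hswap : (tt d ^ ((σ : ℤˣ) : ℤ)) ^ (N - 1) *
                (tt d ^ ((σ : ℤˣ) : ℤ) * (xh d * (W'.toList.map (lp d)).prod)) =
                (tt d ^ ((i : ℕ) : ℤ))⁻¹ * (tt d ^ ((j : ℕ) : ℤ) * (xh d * (W'.toList.map (lp d)).prod)) := by
              have h1 : (σ : ℤ) * ((N - 1 : ℕ) : ℤ) + (σ : ℤ) = -(i : ℤ) + (j : ℤ) := by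
                have h2 : (σ : ℤ) * ((N - 1 : ℕ) : ℤ) + (σ : ℤ) = (σ : ℤ) * (N : ℤ) := by
                  rw [Nat.cast_sub hN1]; push_cast; ring
                rw [h2, hσN, hk]; ring
              rw [← mul_assoc, ← zpow_natCast (tt d ^ ((σ : ℤˣ) : ℤ)) (N - 1), ← zpow_mul,
                ← zpow_add, h1, zpow_add, zpow_neg, mul_assoc]
            simp only [hsplit, psi_single, hW3, prod_eq, hW1, List.map_cons, List.map_append,
              List.prod_cons, List.prod_append, List.map_replicate, List.prod_replicate, map_one,
              one_mul, mul_one, map_inv, lp, of_xg, zpow_neg, mul_assoc, inv_mul_cancel_left,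
              hswap]

def W3 (i : ℕ) : ReducedWord (G0 d) ⊥ ⊥ :=
  ⟨(xg d)⁻¹, List.replicate i ((-1 : ℤˣ), (1 : G0 d)),
    List.isChain_replicate_of_rel _ (fun _ => rfl)⟩

lemma W3_prod (i : ℕ) : (W3 d i).prod (φ0 d) = (xh d)⁻¹ * tt d ^ (-(i : ℤ)) := by
  rw [prod_eq]
  show HNNExtension.of ((xg d)⁻¹) * ((List.replicate i ((-1 : ℤˣ), (1 : G0 d))).map (lp d)).prod = _
  rw [prod_replicate_neg, map_inv, of_xg]

theorem psi_injective (hd : 2 ≤ d) : Function.Injective (ψ d) := by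
  rw [injective_iff_map_eq_one]
  intro g hg
  by_contra hg1
  have hW : FreeGroup.reduce g.toWord = g.toWord := FreeGroup.reduce_toWord g
  rcases hL : g.toWord with _ | ⟨⟨i, b⟩, L⟩
  · exact hg1 (FreeGroup.toWord_eq_nil_iff.1 hL)
  · rw [hL] at hW
    obtain ⟨W, hW1, hW2, hW3⟩ := key d hd L i b hW
    rw [← hL, FreeGroup.mk_toWord, hg] at hW3
    have hP : tt d ^ (i : ℤ) * xh d * W.prod (φ0 d) = 1 := hW3.symm
    have hprod : W.prod (φ0 d) = (W3 d i).prod (φ0 d) := by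
      rw [W3_prod]
      have h3 : tt d ^ (i : ℤ) * xh d * W.prod (φ0 d) =
          tt d ^ (i : ℤ) * xh d * ((xh d)⁻¹ * tt d ^ (-(i : ℤ))) := by
        rw [hP, mul_assoc, mul_inv_cancel_left, ← zpow_add, add_neg_cancel, zpow_zero]
      exact mul_left_cancel h3
    have hmem : sgn b ∈ Option.map Prod.fst W.toList.head? := by
      rw [hW2]; rfl
    have := ((ReducedWord.map_fst_eq_and_of_prod_eq (φ0 d) hprod).2) (sgn b) hmem
    rw [mem_bot_iff, hW1, inv_one, one_mul, W3, inv_eq_one] at this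
    exact xg_ne_one d hd this

end

end BSAux

/-- If `d = gcd(m,n) ≥ 2`, then `BS(m,n)` contains a free non-abelian subgroup of
countably infinite rank, i.e. a subgroup isomorphic to the free group on `ℕ`. -/
theorem bs_contains_free_subgroup_of_infinite_rank (m n : ℤ) (hm : m ≠ 0) (hn : n ≠ 0)
    (hd : 2 ≤ Int.gcd m n) :
    ∃ H : Subgroup (BS m n), Nonempty (H ≃* FreeGroup ℕ) := by
  classical
  set d : ℕ := Int.gcd m n with hdd
  have hxm : BSAux.xh d ^ m = 1 := by
    rw [BSAux.xh, ← map_zpow]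
    have h1 : BSAux.xg d ^ m = 1 := by
      rw [BSAux.xg, ← ofAdd_zsmul, zsmul_one]
      have h0 : ((m : ℤ) : ZMod d) = 0 :=
        (ZMod.intCast_zmod_eq_zero_iff_dvd m d).2 (Int.gcd_dvd_left _ _)
      rw [h0]; rfl
    rw [h1, map_one]
  have hxn : BSAux.xh d ^ n = 1 := by
    rw [BSAux.xh, ← map_zpow]
    have h1 : BSAux.xg d ^ n = 1 := by
      rw [BSAux.xg, ← ofAdd_zsmul, zsmul_one]
      have h0 : ((n : ℤ) : ZMod d) = 0 :=
        (ZMod.intCast_zmod_eq_zero_iff_dvd n d).2 (Int.gcd_dvd_right _ _)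
      rw [h0]; rfl
    rw [h1, map_one]
  set fm : Fin 2 → BSAux.H d := fun i => if i = 0 then BSAux.xh d else BSAux.tt d with hfm
  have e0 : fm 0 = BSAux.xh d := by simp [hfm]
  have e1 : fm 1 = BSAux.tt d := by
    rw [hfm]
    exact if_neg (by decide)
  have hrel : ∀ r ∈ BSrels m n, FreeGroup.lift fm r = 1 := by
    intro r hr
    rw [BSrels, Set.mem_singleton_iff] at hr
    subst hr
    simp only [map_mul, map_inv, map_zpow, FreeGroup.lift_apply_of]
    rw [e0, e1, hxm, hxn]
    simp
  set π : BS m n →* BSAux.H d := PresentedGroup.toGroup hrel with hπ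
  set fg : ℕ → BS m n := fun i =>
    bst m n ^ (i : ℤ) * bsa m n * bst m n * (bsa m n)⁻¹ * bst m n ^ (-(i : ℤ)) with hfg
  set fhom : FreeGroup ℕ →* BS m n := FreeGroup.lift fg with hfhom
  have ha : π (bsa m n) = BSAux.xh d := by
    rw [hπ, bsa, PresentedGroup.toGroup.of, e0]
  have ht : π (bst m n) = BSAux.tt d := by
    rw [hπ, bst, PresentedGroup.toGroup.of, e1]
  have hcomp : π.comp fhom = BSAux.ψ d := by
    ext i
    simp only [MonoidHom.comp_apply, hfhom, FreeGroup.lift_apply_of, hfg, BSAux.ψ]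
    simp only [map_mul, map_inv, map_zpow, ha, ht, BSAux.gen]
  have hinj : Function.Injective fhom := by
    intro a b hab
    apply BSAux.psi_injective d hd
    rw [← DFunLike.congr_fun hcomp a, ← DFunLike.congr_fun hcomp b]
    simp only [MonoidHom.comp_apply, hab]
  exact ⟨fhom.range, ⟨(MonoidHom.ofInjective hinj).symm⟩⟩
end
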